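/- arXiv:2305.10950 — 9 statements merged into one kernel-verified Lean document; each statement's English description precedes it below -/
import Mathlib

section
/- Let d ≥ 1 be an integer and let Γ₁ and Γ₂ be subgroups of the orthogonal group O(d+1) of (d+1)×(d+1) real matrices, each of order 2. If for every z ∈ ℂ with |z| < 1 one has Σ_{γ∈Γ₁} det(I_{d+1} − z·γ)⁻¹ = Σ_{γ∈Γ₂} det(I_{d+1} − z·γ)⁻¹ (viewing each γ as a complex matrix), then Γ₁ and Γ₂ are conjugate in O(d+1), i.e. there exists g ∈ O(d+1) with g·Γ₁·g⁻¹ = Γ₂. -/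
open Matrix

lemma grp_two {G : Type*} [Group G] (Γ : Subgroup G) (h : Nat.card Γ = 2) :
    ∃ a : G, a ∈ Γ ∧ a ≠ 1 ∧ a * a = 1 ∧ ∀ x : G, x ∈ Γ ↔ x = 1 ∨ x = a := by
  have hfin : Finite Γ := Nat.finite_of_card_ne_zero (by omega)
  have hnt : Nontrivial Γ := by
    rw [← Finite.one_lt_card_iff_nontrivial, h]; omega
  obtain ⟨b, hb⟩ := exists_ne (1 : Γ)
  have hbne : (b : G) ≠ 1 := by
    rw [ne_eq, OneMemClass.coe_eq_one]; exact hb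
  refine ⟨(b : G), b.2, hbne, ?_, ?_⟩
  · have : b ^ Nat.card Γ = 1 := pow_card_eq_one'
    rw [h, pow_two] at this
    have := congrArg (Subtype.val) this
    simpa using this
  · intro x
    constructor
    · intro hx
      by_contra hc
      push_neg at hc
      haveI := Fintype.ofFinite Γ
      haveI : DecidableEq Γ := Classical.decEq _
      have hx1 : (⟨x, hx⟩ : Γ) ≠ 1 := by
        rw [ne_eq, ← OneMemClass.coe_eq_one]; exact hc.1
      have hxb : (⟨x, hx⟩ : Γ) ≠ b := by
        intro e; exact hc.2 (congrArg Subtype.val e)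
      have h3 : ({⟨x, hx⟩, 1, b} : Finset Γ).card = 3 := by
        rw [Finset.card_insert_of_notMem (by simp [hx1, hxb]),
          Finset.card_insert_of_notMem (by simpa using hb.symm), Finset.card_singleton]
      have := Finset.card_le_univ ({⟨x, hx⟩, 1, b} : Finset Γ)
      rw [h3, ← Nat.card_eq_fintype_card, h] at this
      omega
    · rintro (rfl | rfl)
      · exact Γ.one_mem
      · exact b.2

lemma tsum_two {G : Type*} [Group G] (Γ : Subgroup G) (a : G) (ha : a ∈ Γ) (hne : a ≠ 1)
    (hch : ∀ x : G, x ∈ Γ ↔ x = 1 ∨ x = a) (f : G → ℂ) :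
    ∑' γ : Γ, f γ = f 1 + f a := by
  have hbij : Function.Bijective (fun b : Bool => if b then (⟨a, ha⟩ : Γ) else ⟨1, Γ.one_mem⟩) := by
    constructor
    · intro x y hxy
      cases x <;> cases y <;> simp_all [Subtype.ext_iff]
    · rintro ⟨x, hx⟩
      rcases (hch x).mp hx with rfl | rfl
      · exact ⟨false, rfl⟩
      · exact ⟨true, rfl⟩
  rw [← (Equiv.ofBijective _ hbij).tsum_eq, tsum_bool]
  simp [Equiv.ofBijective, add_comm]

variable {m : ℕ}

lemma herm_of_inv (a : Matrix.orthogonalGroup (Fin m) ℝ) (ha : a * a = 1) :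
    (a : Matrix (Fin m) (Fin m) ℝ).IsHermitian := by
  have h1 : (a : Matrix (Fin m) (Fin m) ℝ) * (a : Matrix (Fin m) (Fin m) ℝ) = 1 :=
    congrArg Subtype.val ha
  have h2 : star (a : Matrix (Fin m) (Fin m) ℝ) * (a : Matrix (Fin m) (Fin m) ℝ) = 1 :=
    (Unitary.mem_iff.mp a.2).1
  show star (a : Matrix (Fin m) (Fin m) ℝ) = a
  calc star (a : Matrix (Fin m) (Fin m) ℝ)
      = star (a : Matrix (Fin m) (Fin m) ℝ) * ((a : Matrix (Fin m) (Fin m) ℝ) * a) := by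
        rw [h1, mul_one]
    _ = (star (a : Matrix (Fin m) (Fin m) ℝ) * a) * a := by rw [mul_assoc]
    _ = a := by rw [h2, one_mul]

lemma diag_conj (a : Matrix.orthogonalGroup (Fin m) ℝ)
    (hB : (a : Matrix (Fin m) (Fin m) ℝ).IsHermitian) :
    star (hB.eigenvectorUnitary : Matrix (Fin m) (Fin m) ℝ) * a *
      (hB.eigenvectorUnitary : Matrix (Fin m) (Fin m) ℝ) = diagonal hB.eigenvalues := by
  have hU1 : star (hB.eigenvectorUnitary : Matrix (Fin m) (Fin m) ℝ) *
      (hB.eigenvectorUnitary : Matrix (Fin m) (Fin m) ℝ) = 1 :=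
    (Unitary.mem_iff.mp hB.eigenvectorUnitary.2).1
  have hspec : (a : Matrix (Fin m) (Fin m) ℝ) =
      (hB.eigenvectorUnitary : Matrix (Fin m) (Fin m) ℝ) * diagonal hB.eigenvalues *
        star (hB.eigenvectorUnitary : Matrix (Fin m) (Fin m) ℝ) := by
    have := hB.spectral_theorem
    simpa [RCLike.ofReal_real_eq_id] using this
  refine (congrArg (fun M => star (hB.eigenvectorUnitary : Matrix (Fin m) (Fin m) ℝ) * M *
    (hB.eigenvectorUnitary : Matrix (Fin m) (Fin m) ℝ)) hspec).trans ?_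
  show star (hB.eigenvectorUnitary : Matrix (Fin m) (Fin m) ℝ) *
      ((hB.eigenvectorUnitary : Matrix (Fin m) (Fin m) ℝ) * diagonal hB.eigenvalues *
        star (hB.eigenvectorUnitary : Matrix (Fin m) (Fin m) ℝ)) *
      (hB.eigenvectorUnitary : Matrix (Fin m) (Fin m) ℝ) = diagonal hB.eigenvalues
  calc star (hB.eigenvectorUnitary : Matrix (Fin m) (Fin m) ℝ) *
        ((hB.eigenvectorUnitary : Matrix (Fin m) (Fin m) ℝ) * diagonal hB.eigenvalues *
          star (hB.eigenvectorUnitary : Matrix (Fin m) (Fin m) ℝ)) *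
        (hB.eigenvectorUnitary : Matrix (Fin m) (Fin m) ℝ)
      = (star (hB.eigenvectorUnitary : Matrix (Fin m) (Fin m) ℝ) *
          (hB.eigenvectorUnitary : Matrix (Fin m) (Fin m) ℝ)) * diagonal hB.eigenvalues *
        (star (hB.eigenvectorUnitary : Matrix (Fin m) (Fin m) ℝ) *
          (hB.eigenvectorUnitary : Matrix (Fin m) (Fin m) ℝ)) := by
        simp only [Matrix.mul_assoc]
    _ = diagonal hB.eigenvalues := by rw [hU1, Matrix.one_mul, Matrix.mul_one]

lemma eig_pm (a : Matrix.orthogonalGroup (Fin m) ℝ) (ha : a * a = 1)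
    (hB : (a : Matrix (Fin m) (Fin m) ℝ).IsHermitian) (i : Fin m) :
    hB.eigenvalues i = 1 ∨ hB.eigenvalues i = -1 := by
  have h1 : (a : Matrix (Fin m) (Fin m) ℝ) * (a : Matrix (Fin m) (Fin m) ℝ) = 1 :=
    congrArg Subtype.val ha
  have hU1 : star (hB.eigenvectorUnitary : Matrix (Fin m) (Fin m) ℝ) *
      (hB.eigenvectorUnitary : Matrix (Fin m) (Fin m) ℝ) = 1 :=
    (Unitary.mem_iff.mp hB.eigenvectorUnitary.2).1
  have hU2 : (hB.eigenvectorUnitary : Matrix (Fin m) (Fin m) ℝ) *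
      star (hB.eigenvectorUnitary : Matrix (Fin m) (Fin m) ℝ) = 1 :=
    (Unitary.mem_iff.mp hB.eigenvectorUnitary.2).2
  have hDB := diag_conj a hB
  have hD : diagonal hB.eigenvalues * diagonal hB.eigenvalues = 1 := by
    rw [← hDB]
    calc (star (hB.eigenvectorUnitary : Matrix (Fin m) (Fin m) ℝ) * a *
          (hB.eigenvectorUnitary : Matrix (Fin m) (Fin m) ℝ)) *
        (star (hB.eigenvectorUnitary : Matrix (Fin m) (Fin m) ℝ) * a *
          (hB.eigenvectorUnitary : Matrix (Fin m) (Fin m) ℝ))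
        = star (hB.eigenvectorUnitary : Matrix (Fin m) (Fin m) ℝ) *
            ((a : Matrix (Fin m) (Fin m) ℝ) * (((hB.eigenvectorUnitary : Matrix (Fin m) (Fin m) ℝ) *
              star (hB.eigenvectorUnitary : Matrix (Fin m) (Fin m) ℝ)) * ((a : Matrix (Fin m) (Fin m) ℝ) *
              (hB.eigenvectorUnitary : Matrix (Fin m) (Fin m) ℝ)))) := by
          simp only [Matrix.mul_assoc]
      _ = 1 := by
          rw [hU2, Matrix.one_mul, ← Matrix.mul_assoc (a : Matrix (Fin m) (Fin m) ℝ), h1,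
            Matrix.one_mul, hU1]
  rw [diagonal_mul_diagonal] at hD
  have := congrFun (congrFun hD i) i
  simp only [diagonal_apply_eq, Matrix.one_apply_eq] at this
  exact mul_self_eq_one_iff.mp this

lemma det_formula (a : Matrix.orthogonalGroup (Fin m) ℝ)
    (hB : (a : Matrix (Fin m) (Fin m) ℝ).IsHermitian) (z : ℂ) :
    (1 - z • ((a : Matrix (Fin m) (Fin m) ℝ).map Complex.ofReal)).det
      = ∏ i, (1 - z * (hB.eigenvalues i : ℂ)) := by
  have hspec : (a : Matrix (Fin m) (Fin m) ℝ) =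
      (hB.eigenvectorUnitary : Matrix (Fin m) (Fin m) ℝ) * diagonal hB.eigenvalues *
        star (hB.eigenvectorUnitary : Matrix (Fin m) (Fin m) ℝ) := by
    have := hB.spectral_theorem
    simpa [RCLike.ofReal_real_eq_id] using this
  have hU2 : (hB.eigenvectorUnitary : Matrix (Fin m) (Fin m) ℝ) *
      star (hB.eigenvectorUnitary : Matrix (Fin m) (Fin m) ℝ) = 1 :=
    (Unitary.mem_iff.mp hB.eigenvectorUnitary.2).2
  have hmapmul : ∀ M N : Matrix (Fin m) (Fin m) ℝ,
      (M * N).map Complex.ofReal = M.map Complex.ofReal * N.map Complex.ofReal := fun M N =>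
    Matrix.map_mul (f := Complex.ofRealHom)
  have hstar : ∀ M : Matrix (Fin m) (Fin m) ℝ, (star M).map Complex.ofReal
      = star (M.map Complex.ofReal) := by
    intro M
    ext i j
    simp only [Matrix.map_apply, Matrix.conjTranspose_apply, Matrix.star_apply, star_trivial]
    exact (Complex.conj_ofReal _).symm
  have hUc2 : (hB.eigenvectorUnitary : Matrix (Fin m) (Fin m) ℝ).map Complex.ofReal *
      star ((hB.eigenvectorUnitary : Matrix (Fin m) (Fin m) ℝ).map Complex.ofReal) = 1 := by
    rw [← hstar, ← hmapmul, hU2]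
    exact Matrix.map_one _ (map_zero Complex.ofRealHom) (map_one Complex.ofRealHom)
  have hDc : (diagonal hB.eigenvalues).map Complex.ofReal
      = diagonal (fun i => (hB.eigenvalues i : ℂ)) :=
    Matrix.diagonal_map (by simp)
  have hBc : (a : Matrix (Fin m) (Fin m) ℝ).map Complex.ofReal
      = (hB.eigenvectorUnitary : Matrix (Fin m) (Fin m) ℝ).map Complex.ofReal *
        diagonal (fun i => (hB.eigenvalues i : ℂ)) *
        star ((hB.eigenvectorUnitary : Matrix (Fin m) (Fin m) ℝ).map Complex.ofReal) := by
    refine (congrArg (fun M : Matrix (Fin m) (Fin m) ℝ => M.map Complex.ofReal) hspec).trans ?_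
    show ((hB.eigenvectorUnitary : Matrix (Fin m) (Fin m) ℝ) * diagonal hB.eigenvalues *
        star (hB.eigenvectorUnitary : Matrix (Fin m) (Fin m) ℝ)).map Complex.ofReal = _
    rw [hmapmul, hmapmul, hstar, hDc]
  have hdiag : diagonal (fun i => 1 - z * (hB.eigenvalues i : ℂ))
      = 1 - z • diagonal (fun i => (hB.eigenvalues i : ℂ)) := by
    rw [← Matrix.diagonal_one, ← Matrix.diagonal_smul, ← Matrix.diagonal_sub]
    congr 1
  have key : 1 - z • ((a : Matrix (Fin m) (Fin m) ℝ).map Complex.ofReal)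
      = (hB.eigenvectorUnitary : Matrix (Fin m) (Fin m) ℝ).map Complex.ofReal *
        diagonal (fun i => 1 - z * (hB.eigenvalues i : ℂ)) *
        star ((hB.eigenvectorUnitary : Matrix (Fin m) (Fin m) ℝ).map Complex.ofReal) := by
    rw [hdiag, Matrix.mul_sub, Matrix.sub_mul, Matrix.mul_one, hUc2, hBc]
    congr 1
    rw [Matrix.mul_smul, Matrix.smul_mul]
  have hdet1 : ((hB.eigenvectorUnitary : Matrix (Fin m) (Fin m) ℝ).map Complex.ofReal).det *
      (star ((hB.eigenvectorUnitary : Matrix (Fin m) (Fin m) ℝ).map Complex.ofReal)).det = 1 := by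
    rw [← Matrix.det_mul, hUc2, Matrix.det_one]
  rw [key, Matrix.det_mul, Matrix.det_mul, mul_right_comm, hdet1, one_mul, Matrix.det_diagonal]

lemma prod_val {m : ℕ} (μ : Fin m → ℝ) (hμ : ∀ i, μ i = 1 ∨ μ i = -1)
    [DecidablePred (fun i => μ i = 1)] :
    ∏ i, (1 - (1/2 : ℂ) * (μ i : ℂ))
      = (1/2 : ℂ) ^ (Finset.univ.filter (fun i => μ i = 1)).card
        * (3/2 : ℂ) ^ (Finset.univ.filter (fun i => ¬ μ i = 1)).card := by
  rw [← Finset.prod_filter_mul_prod_filter_not Finset.univ (fun i => μ i = 1)]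
  congr 1
  · rw [Finset.prod_congr rfl (fun i hi => show (1 - (1/2:ℂ) * (μ i : ℂ)) = 1/2 by
      rw [(Finset.mem_filter.mp hi).2]; norm_num), Finset.prod_const]
  · rw [Finset.prod_congr rfl (fun i hi => show (1 - (1/2:ℂ) * (μ i : ℂ)) = 3/2 by
      rcases hμ i with h | h
      · exact absurd h (Finset.mem_filter.mp hi).2
      · rw [h]; norm_num), Finset.prod_const]

lemma count_eq {m : ℕ} (μ₁ μ₂ : Fin m → ℝ)
    (h₁ : ∀ i, μ₁ i = 1 ∨ μ₁ i = -1) (h₂ : ∀ i, μ₂ i = 1 ∨ μ₂ i = -1)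
    (h : ∏ i, (1 - (1/2 : ℂ) * (μ₁ i : ℂ)) = ∏ i, (1 - (1/2 : ℂ) * (μ₂ i : ℂ))) :
    Nat.card {i // μ₁ i = 1} = Nat.card {i // μ₂ i = 1} := by
  classical
  rw [prod_val μ₁ h₁, prod_val μ₂ h₂] at h
  set p₁ := (Finset.univ.filter (fun i => μ₁ i = 1)).card with hp₁
  set q₁ := (Finset.univ.filter (fun i => ¬ μ₁ i = 1)).card with hq₁
  set p₂ := (Finset.univ.filter (fun i => μ₂ i = 1)).card with hp₂
  set q₂ := (Finset.univ.filter (fun i => ¬ μ₂ i = 1)).card with hq₂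
  have hs₁ : p₁ + q₁ = m := by
    simpa using Finset.card_filter_add_card_filter_not
      (s := (Finset.univ : Finset (Fin m))) (p := fun i => μ₁ i = 1)
  have hs₂ : p₂ + q₂ = m := by
    simpa using Finset.card_filter_add_card_filter_not
      (s := (Finset.univ : Finset (Fin m))) (p := fun i => μ₂ i = 1)
  have key : ∀ p q : ℕ, p + q = m → (1/2:ℂ)^p * (3/2:ℂ)^q * 2^m = 3^q := by
    intro p q hpq
    rw [← hpq, pow_add]
    have : ((1:ℂ)/2)^p * (3/2:ℂ)^q * ((2:ℂ)^p * 2^q) = ((1/2:ℂ)*2)^p * ((3/2:ℂ)*2)^q := by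
      rw [mul_pow, mul_pow]; ring
    rw [this]
    norm_num
  have h3 : (3:ℂ)^q₁ = (3:ℂ)^q₂ := by
    rw [← key p₁ q₁ hs₁, ← key p₂ q₂ hs₂, h]
  have h3n : (3:ℕ)^q₁ = (3:ℕ)^q₂ := by
    have : (((3:ℕ)^q₁ : ℕ) : ℂ) = (((3:ℕ)^q₂ : ℕ) : ℂ) := by push_cast; exact h3
    exact_mod_cast this
  have hq : q₁ = q₂ := Nat.pow_right_injective (by norm_num) h3n
  have hp : p₁ = p₂ := by omega
  rw [Nat.card_eq_fintype_card, Nat.card_eq_fintype_card, Fintype.card_subtype,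
    Fintype.card_subtype]
  exact hp

lemma exists_perm {m : ℕ} (μ₁ μ₂ : Fin m → ℝ)
    (h₁ : ∀ i, μ₁ i = 1 ∨ μ₁ i = -1) (h₂ : ∀ i, μ₂ i = 1 ∨ μ₂ i = -1)
    (hc : Nat.card {i // μ₁ i = 1} = Nat.card {i // μ₂ i = 1}) :
    ∃ σ : Equiv.Perm (Fin m), ∀ i, μ₂ (σ i) = μ₁ i := by
  classical
  have hc' : Fintype.card {i // μ₁ i = 1} = Fintype.card {i // μ₂ i = 1} := by
    simpa [Nat.card_eq_fintype_card] using hc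
  have hcn : Fintype.card {i // ¬ μ₁ i = 1} = Fintype.card {i // ¬ μ₂ i = 1} := by
    rw [Fintype.card_subtype_compl, Fintype.card_subtype_compl, hc']
  let e₁ := Fintype.equivOfCardEq hc'
  let e₂ := Fintype.equivOfCardEq hcn
  refine ⟨((Equiv.sumCompl (fun i => μ₁ i = 1)).symm.trans
    ((e₁.sumCongr e₂).trans (Equiv.sumCompl (fun i => μ₂ i = 1)))), fun i => ?_⟩
  by_cases h : μ₁ i = 1
  · have e : (Equiv.sumCompl fun j => μ₁ j = 1).symm i = Sum.inl ⟨i, h⟩ :=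
      Equiv.sumCompl_symm_apply_of_pos (p := fun j => μ₁ j = 1) (a := i) h
    simp only [Equiv.trans_apply, Equiv.sumCongr_apply, e, Sum.map_inl,
      Equiv.sumCompl_apply_inl]
    rw [(e₁ ⟨i, h⟩).2, h]
  · have e : (Equiv.sumCompl fun j => μ₁ j = 1).symm i = Sum.inr ⟨i, h⟩ :=
      Equiv.sumCompl_symm_apply_of_neg (p := fun j => μ₁ j = 1) (a := i) h
    simp only [Equiv.trans_apply, Equiv.sumCongr_apply, e, Sum.map_inr,
      Equiv.sumCompl_apply_inr]
    rcases h₂ (e₂ ⟨i, h⟩) with h' | h'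
    · exact absurd h' (e₂ ⟨i, h⟩).2
    · rcases h₁ i with h'' | h''
      · exact absurd h'' h
      · rw [h', h'']

lemma perm_star {m : ℕ} (σ : Equiv.Perm (Fin m)) :
    star (σ.permMatrix ℝ) = (σ⁻¹).permMatrix ℝ := by
  ext i j
  simp only [Matrix.star_apply, star_trivial, Equiv.Perm.permMatrix,
    PEquiv.toMatrix_apply, Equiv.toPEquiv_apply, Option.mem_some_iff]
  by_cases h : i = σ j
  · simp [h]
  · rw [if_neg (fun hc => h hc.symm),
      if_neg (fun hc => h (by rw [← hc, ← Equiv.Perm.mul_apply, mul_inv_cancel, Equiv.Perm.one_apply]))]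

lemma perm_orth {m : ℕ} (σ : Equiv.Perm (Fin m)) :
    σ.permMatrix ℝ ∈ Matrix.orthogonalGroup (Fin m) ℝ := by
  rw [Matrix.mem_orthogonalGroup_iff, ← Matrix.conjTranspose_eq_transpose_of_trivial,
    ← Matrix.star_eq_conjTranspose, perm_star]
  rw [Equiv.Perm.permMatrix, Equiv.Perm.permMatrix, ← PEquiv.toMatrix_trans,
    ← Equiv.toPEquiv_trans]
  have : σ.trans σ⁻¹ = Equiv.refl (Fin m) := Equiv.self_trans_symm σ
  rw [this, Equiv.toPEquiv_refl, PEquiv.toMatrix_refl]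

lemma perm_conj {m : ℕ} (σ : Equiv.Perm (Fin m)) (μ : Fin m → ℝ) :
    σ.permMatrix ℝ * diagonal μ * (σ⁻¹).permMatrix ℝ = diagonal (μ ∘ σ) := by
  rw [Equiv.Perm.permMatrix, Equiv.Perm.permMatrix, PEquiv.toMatrix_toPEquiv_mul,
    PEquiv.mul_toMatrix_toPEquiv, Matrix.submatrix_submatrix]
  have h1 : (⇑σ ∘ id : Fin m → Fin m) = ⇑σ := by funext x; rfl
  have h2 : (id ∘ ⇑(σ⁻¹).symm : Fin m → Fin m) = ⇑σ := by funext x; rfl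
  rw [h1, h2]
  exact Matrix.submatrix_diagonal_equiv μ σ

lemma spec_real {m : ℕ} (a : Matrix.orthogonalGroup (Fin m) ℝ)
    (hB : (a : Matrix (Fin m) (Fin m) ℝ).IsHermitian) :
    (a : Matrix (Fin m) (Fin m) ℝ) =
      (hB.eigenvectorUnitary : Matrix (Fin m) (Fin m) ℝ) * diagonal hB.eigenvalues *
        star (hB.eigenvectorUnitary : Matrix (Fin m) (Fin m) ℝ) := by
  simpa [RCLike.ofReal_real_eq_id] using hB.spectral_theorem

/-- The summand `det(I − z·γ)⁻¹` in Ikeda's generating function, where the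
orthogonal matrix `γ` is viewed as a complex matrix. -/
noncomputable def ikedaTerm (d : ℕ) (z : ℂ)
    (γ : Matrix.orthogonalGroup (Fin (d + 1)) ℝ) : ℂ :=
  ((1 - z • ((γ : Matrix (Fin (d + 1)) (Fin (d + 1)) ℝ).map Complex.ofReal)).det)⁻¹

/-- Two subgroups of `O(d+1)` of order `2` whose Ikeda generating sums agree on the
open unit disc are conjugate in `O(d+1)`. -/
theorem conj_of_isospectral_of_card_two
    (d : ℕ) (hd : 1 ≤ d)
    (Γ₁ Γ₂ : Subgroup (Matrix.orthogonalGroup (Fin (d + 1)) ℝ))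
    (h₁ : Nat.card Γ₁ = 2) (h₂ : Nat.card Γ₂ = 2)
    (hiso : ∀ z : ℂ, ‖z‖ < 1 →
      ∑' γ : Γ₁, ikedaTerm d z (γ : Matrix.orthogonalGroup (Fin (d + 1)) ℝ)
        = ∑' γ : Γ₂, ikedaTerm d z (γ : Matrix.orthogonalGroup (Fin (d + 1)) ℝ)) :
    ∃ g : Matrix.orthogonalGroup (Fin (d + 1)) ℝ,
      ∀ x : Matrix.orthogonalGroup (Fin (d + 1)) ℝ,
        x ∈ Γ₂ ↔ ∃ γ ∈ Γ₁, x = g * γ * g⁻¹ := by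
  obtain ⟨a₁, ha₁, ha₁ne, ha₁sq, hch₁⟩ := grp_two Γ₁ h₁
  obtain ⟨a₂, ha₂, ha₂ne, ha₂sq, hch₂⟩ := grp_two Γ₂ h₂
  have hB₁ := herm_of_inv a₁ ha₁sq
  have hB₂ := herm_of_inv a₂ ha₂sq
  have hpm₁ := eig_pm a₁ ha₁sq hB₁
  have hpm₂ := eig_pm a₂ ha₂sq hB₂
  have hz : ‖(1/2 : ℂ)‖ < 1 := by
    rw [norm_div, norm_one, Complex.norm_two]; norm_num
  have hsum := hiso (1/2) hz
  rw [tsum_two Γ₁ a₁ ha₁ ha₁ne hch₁ (ikedaTerm d (1/2)),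
      tsum_two Γ₂ a₂ ha₂ ha₂ne hch₂ (ikedaTerm d (1/2))] at hsum
  have hterm : ikedaTerm d (1/2) a₁ = ikedaTerm d (1/2) a₂ := add_left_cancel hsum
  simp only [ikedaTerm] at hterm
  have hdet := inv_inj.mp hterm
  have hprod : ∏ i, (1 - (1/2:ℂ) * (hB₁.eigenvalues i : ℂ))
      = ∏ i, (1 - (1/2:ℂ) * (hB₂.eigenvalues i : ℂ)) := by
    rw [← det_formula a₁ hB₁, ← det_formula a₂ hB₂]
    exact hdet
  obtain ⟨σ, hσ⟩ := exists_perm hB₁.eigenvalues hB₂.eigenvalues hpm₁ hpm₂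
    (count_eq hB₁.eigenvalues hB₂.eigenvalues hpm₁ hpm₂ hprod)
  set u₁ : Matrix.orthogonalGroup (Fin (d+1)) ℝ := hB₁.eigenvectorUnitary with hu₁
  set u₂ : Matrix.orthogonalGroup (Fin (d+1)) ℝ := hB₂.eigenvectorUnitary with hu₂
  set p : Matrix.orthogonalGroup (Fin (d+1)) ℝ := ⟨(σ⁻¹).permMatrix ℝ, perm_orth _⟩ with hp
  have hg : (u₂ * p * u₁⁻¹) * a₁ * (u₂ * p * u₁⁻¹)⁻¹ = a₂ := by
    apply Subtype.ext
    show ((u₂ : Matrix (Fin (d+1)) (Fin (d+1)) ℝ) * (σ⁻¹).permMatrix ℝ *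
        star (u₁ : Matrix (Fin (d+1)) (Fin (d+1)) ℝ)) * (a₁ : Matrix (Fin (d+1)) (Fin (d+1)) ℝ) *
        star ((u₂ : Matrix (Fin (d+1)) (Fin (d+1)) ℝ) * (σ⁻¹).permMatrix ℝ *
          star (u₁ : Matrix (Fin (d+1)) (Fin (d+1)) ℝ)) = (a₂ : Matrix (Fin (d+1)) (Fin (d+1)) ℝ)
    rw [StarMul.star_mul, StarMul.star_mul, star_star, perm_star, inv_inv]
    calc ((u₂ : Matrix (Fin (d+1)) (Fin (d+1)) ℝ) * (σ⁻¹).permMatrix ℝ *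
          star (u₁ : Matrix (Fin (d+1)) (Fin (d+1)) ℝ)) * (a₁ : Matrix (Fin (d+1)) (Fin (d+1)) ℝ) *
          ((u₁ : Matrix (Fin (d+1)) (Fin (d+1)) ℝ) *
            (σ.permMatrix ℝ * star (u₂ : Matrix (Fin (d+1)) (Fin (d+1)) ℝ)))
        = (u₂ : Matrix (Fin (d+1)) (Fin (d+1)) ℝ) * ((σ⁻¹).permMatrix ℝ *
            (star (u₁ : Matrix (Fin (d+1)) (Fin (d+1)) ℝ) * (a₁ : Matrix (Fin (d+1)) (Fin (d+1)) ℝ) *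
              (u₁ : Matrix (Fin (d+1)) (Fin (d+1)) ℝ)) * σ.permMatrix ℝ) *
            star (u₂ : Matrix (Fin (d+1)) (Fin (d+1)) ℝ) := by
          simp only [Matrix.mul_assoc]
      _ = (u₂ : Matrix (Fin (d+1)) (Fin (d+1)) ℝ) * ((σ⁻¹).permMatrix ℝ *
            diagonal hB₁.eigenvalues * σ.permMatrix ℝ) *
            star (u₂ : Matrix (Fin (d+1)) (Fin (d+1)) ℝ) := by
          rw [diag_conj a₁ hB₁]
      _ = (u₂ : Matrix (Fin (d+1)) (Fin (d+1)) ℝ) * diagonal (hB₁.eigenvalues ∘ ⇑σ⁻¹) *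
            star (u₂ : Matrix (Fin (d+1)) (Fin (d+1)) ℝ) := by
          have hpc := perm_conj σ⁻¹ hB₁.eigenvalues
          rw [inv_inv] at hpc
          rw [hpc]
      _ = (u₂ : Matrix (Fin (d+1)) (Fin (d+1)) ℝ) * diagonal hB₂.eigenvalues *
            star (u₂ : Matrix (Fin (d+1)) (Fin (d+1)) ℝ) := by
          have : hB₁.eigenvalues ∘ ⇑σ⁻¹ = hB₂.eigenvalues := by
            funext j
            have h' := hσ (σ⁻¹ j)
            rw [← Equiv.Perm.mul_apply, mul_inv_cancel, Equiv.Perm.one_apply] at h'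
            exact (Function.comp_apply).trans h'.symm
          rw [this]
      _ = (a₂ : Matrix (Fin (d+1)) (Fin (d+1)) ℝ) := (spec_real a₂ hB₂).symm
  refine ⟨u₂ * p * u₁⁻¹, fun x => ?_⟩
  constructor
  · intro hx
    rcases (hch₂ x).mp hx with rfl | rfl
    · exact ⟨1, Γ₁.one_mem, by group⟩
    · exact ⟨a₁, ha₁, hg.symm⟩
  · rintro ⟨γ, hγ, rfl⟩
    rcases (hch₁ γ).mp hγ with rfl | rfl
    · have he : (u₂ * p * u₁⁻¹) * 1 * (u₂ * p * u₁⁻¹)⁻¹ = 1 := by group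
      rw [he]; exact Γ₂.one_mem
    · rw [hg]; exact ha₂
end

section
/- Let m, n, r, d be positive integers with m > 1 satisfying: (I.1) gcd(n·(r−1), m) = 1; (I.2) r^n ≡ 1 (mod m) and 1 ≤ r ≤ m; (I.3) d is the least positive integer with r^d ≡ 1 (mod m); (I.4) d divides n and every prime dividing d divides n/d; and m·n < 24. Then (m, n, r, d) = (3, 4, 2, 2) or (m, n, r, d) = (5, 4, 4, 2). -/
set_option synthInstance.maxSize 100000 in
set_option synthInstance.maxHeartbeats 4000000 in
set_option maxHeartbeats 4000000 in
lemma typeI_aux : ∀ m < 24, ∀ n < 24, ∀ r ≤ m, ∀ d ≤ n,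
    (m * n < 24 ∧ 1 < m ∧ 0 < n ∧ 0 < r ∧ 0 < d ∧
    Nat.gcd (n * (r - 1)) m = 1 ∧
    r ^ n % m = 1 % m ∧
    r ^ d % m = 1 % m ∧
    (∀ e < d, ¬(0 < e ∧ r ^ e % m = 1 % m)) ∧
    n % d = 0 ∧ (∀ p ≤ d, p.Prime → d % p = 0 → (n / d) % p = 0)) →
    (m = 3 ∧ n = 4 ∧ r = 2 ∧ d = 2) ∨ (m = 5 ∧ n = 4 ∧ r = 4 ∧ d = 2) := by
  decide

/-- The only non-cyclic fixed point free groups of Type I of order less than 24: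
Wolf's arithmetic conditions (I.1)–(I.4) with `m > 1` and `m·n < 24` force
`(m, n, r, d) = (3, 4, 2, 2)` or `(m, n, r, d) = (5, 4, 4, 2)`. -/
theorem typeI_classification_lt24
    (m n r d : ℕ) (hm : 1 < m) (hn : 0 < n) (hr : 0 < r) (hd : 0 < d)
    -- (I.1)
    (hI1 : Nat.gcd (n * (r - 1)) m = 1)
    -- (I.2)
    (hI2 : r ^ n ≡ 1 [MOD m]) (hr1 : 1 ≤ r) (hrm : r ≤ m)
    -- (I.3) : d is the least positive integer with r^d ≡ 1 (mod m)
    (hI3 : IsLeast {e : ℕ | 0 < e ∧ r ^ e ≡ 1 [MOD m]} d)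
    -- (I.4)
    (hI4 : d ∣ n) (hI4' : ∀ p : ℕ, p.Prime → p ∣ d → p ∣ n / d)
    (h24 : m * n < 24) :
    (m, n, r, d) = (3, 4, 2, 2) ∨ (m, n, r, d) = (5, 4, 4, 2) := by
  have hm24 : m < 24 := lt_of_le_of_lt (Nat.le_mul_of_pos_right m hn) h24
  have hn24 : n < 24 := lt_of_le_of_lt (Nat.le_mul_of_pos_left n (by omega)) h24
  have hdn : d ≤ n := Nat.le_of_dvd hn hI4
  have hmin : ∀ e < d, ¬(0 < e ∧ r ^ e % m = 1 % m) := by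
    intro e he h
    exact absurd (hI3.2 h) (not_le.mpr he)
  have h4 : n % d = 0 := by omega
  have h4' : ∀ p ≤ d, p.Prime → d % p = 0 → (n / d) % p = 0 := by
    intro p _ hp hpd
    have := hI4' p hp (by omega)
    omega
  have := typeI_aux m hm24 n hn24 r hrm d hdn
    ⟨h24, hm, hn, hr, hd, hI1, hI2, hI3.1.2, hmin, h4, h4'⟩
  rcases this with ⟨a,b,c,e⟩|⟨a,b,c,e⟩ <;> simp [a,b,c,e]
end

section
/- Let d, m, n, r, s, t be positive integers satisfying: (I.1) gcd(n·(r−1), m) = 1; (I.2) r^n ≡ 1 (mod m) and 1 ≤ r ≤ m; (I.3) d is the least positive integer with r^d ≡ 1 (mod m); (I.4) d divides n and every prime dividing d divides n/d; (II.1) s² ≡ 1 (mod m) and 1 ≤ s ≤ m; (II.2) r^(t−1) ≡ 1 (mod m); (II.3) n = 2^u·n′′ for some integers u ≥ 2 and n′′ odd; (II.4) t ≡ −1 (mod 2^u), t² ≡ 1 (mod n), and 1 ≤ t ≤ n; and 2·m·n < 24. Then (d, m, n, r, s, t) = (1, 1, 4, 1, 1, 3) or (d, m, n, r, s, t) = (1,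 1, 8, 1, 1, 7). -/
/-- The only non-cyclic fixed point free groups of Type II of order less than 24:
Wolf's arithmetic conditions (I.1)–(I.4) and (II.1)–(II.4) with `2·m·n < 24` force
`(d, m, n, r, s, t) = (1, 1, 4, 1, 1, 3)` or `(d, m, n, r, s, t) = (1, 1, 8, 1, 1, 7)`. -/
theorem typeII_classification_lt24
    (d m n r s t : ℕ)
    (hd : 0 < d) (hm : 0 < m) (hn : 0 < n) (hr : 0 < r) (hs : 0 < s) (ht : 0 < t)
    -- (I.1)
    (hI1 : Nat.gcd (n * (r - 1)) m = 1)
    -- (I.2)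
    (hI2 : r ^ n ≡ 1 [MOD m]) (hr1 : 1 ≤ r) (hrm : r ≤ m)
    -- (I.3) : d is the least positive integer with r^d ≡ 1 (mod m)
    (hI3 : IsLeast {e : ℕ | 0 < e ∧ r ^ e ≡ 1 [MOD m]} d)
    -- (I.4)
    (hI4 : d ∣ n) (hI4' : ∀ p : ℕ, p.Prime → p ∣ d → p ∣ n / d)
    -- (II.1)
    (hII1 : s ^ 2 ≡ 1 [MOD m]) (hs1 : 1 ≤ s) (hsm : s ≤ m)
    -- (II.2)
    (hII2 : r ^ (t - 1) ≡ 1 [MOD m])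
    -- (II.3) and the first part of (II.4), with the same `u`:
    -- `n = 2^u·n″` with `u ≥ 2`, `n″` odd, and `t ≡ −1 (mod 2^u)`
    (hII3 : ∃ u n'' : ℕ, 2 ≤ u ∧ Odd n'' ∧ n = 2 ^ u * n'' ∧ 2 ^ u ∣ (t + 1))
    -- (II.4), remaining parts
    (hII4 : t ^ 2 ≡ 1 [MOD n]) (ht1 : 1 ≤ t) (htn : t ≤ n)
    (h24 : 2 * m * n < 24) :
    (d, m, n, r, s, t) = (1, 1, 4, 1, 1, 3) ∨ (d, m, n, r, s, t) = (1, 1, 8, 1, 1, 7) := by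

  obtain ⟨u, n'', hu2, hodd, hnun, hdvd⟩ := hII3
  -- n is divisible by 4 and < 12
  have hn''pos : 0 < n'' := hodd.pos
  have h4n : 4 ∣ n := by
    have : (2:ℕ)^2 ∣ 2^u := pow_dvd_pow 2 hu2
    rw [hnun]; exact dvd_mul_of_dvd_left (by simpa using this) n''
  have hmn12 : m * n < 12 := by nlinarith
  have hn4' : 4 ≤ n := Nat.le_of_dvd hn h4n
  have hn12 : n < 12 := by
    have : 1 * n ≤ m * n := Nat.mul_le_mul_right n hm
    omega
  -- m = 1
  have hm1 : m = 1 := by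
    by_contra hne
    have hm2 : m = 2 := by
      have : m * 4 ≤ m * n := Nat.mul_le_mul_left m hn4'
      omega
    have h2 : (2:ℕ) ∣ n * (r - 1) := Dvd.dvd.mul_right (by omega) _
    have := Nat.dvd_gcd h2 (by omega : (2:ℕ) ∣ m)
    rw [hI1] at this
    omega
  subst hm1
  have hr' : r = 1 := by omega
  have hs' : s = 1 := by omega
  have hd1 : d = 1 := by
    have := hI3.2 ⟨one_pos, by simp [Nat.ModEq, Nat.mod_one]⟩
    omega
  subst hd1; subst hr'; subst hs'
  -- n = 4 or n = 8
  have hucases : n = 4 ∨ n = 8 := by omega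
  rcases hucases with h4 | h8
  · -- n = 4, so u = 2
    have hu : u = 2 := by
      have h2u : 2^u ≤ 4 := by
        calc 2^u ≤ 2^u * n'' := Nat.le_mul_of_pos_right _ hn''pos
        _ = 4 := by omega
      have : 2^2 ≤ 2^u := Nat.pow_le_pow_right (by norm_num) hu2
      rcases Nat.lt_or_ge u 3 with h | h
      · omega
      · exfalso; have : 2^3 ≤ 2^u := Nat.pow_le_pow_right (by norm_num) h
        norm_num at this; omega
    subst hu
    norm_num at hdvd
    have ht3 : t = 3 := by omega
    left; simp [h4, ht3]
  · -- n = 8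
    have h2u : 2^u ≤ 8 := by
      calc 2^u ≤ 2^u * n'' := Nat.le_mul_of_pos_right _ hn''pos
      _ = 8 := by omega
    have hule : u ≤ 3 := by
      by_contra h
      have : 2^4 ≤ 2^u := Nat.pow_le_pow_right (by norm_num) (by omega)
      norm_num at this; omega
    have hu : u = 3 := by
      rcases Nat.lt_or_ge u 3 with h | h
      · exfalso
        have hu2' : u = 2 := by omega
        subst hu2'
        norm_num at hnun
        have : n'' = 2 := by omega
        rw [this] at hodd
        exact (by decide : ¬ Odd 2) hodd
      · omega
    subst hu
    norm_num at hdvd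
    have ht7 : t = 7 := by omega
    right; simp [h8, ht7]
end

section
/- Let n ≥ 2 and q ≥ 3 be integers and let s = (1, 1, …, 1, 2) ∈ ℤⁿ (all entries 1 except the last entry, which is 2). For k ∈ ℕ let N(k) denote the (finite) number of a = (a₁,…,aₙ) ∈ ℤⁿ with |a₁| + ⋯ + |aₙ| = k and q ∣ (a₁s₁ + ⋯ + aₙsₙ), and let m_k = Σ_{r=0}^{⌊k/2⌋} binom(r+n−2, n−2)·N(k−2r). Then {k ∈ ℕ : m_k > 0} = {k ∈ ℕ : k is even} ∪ {k ∈ ℕ : k is odd and k ≥ 3}. -/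
/-- For the lens space `L(q; 1, …, 1, 2)` (any `q ≥ 3`, `n ≥ 2`), the set of indices `k`
with positive eigenvalue multiplicity `m k` is exactly the even numbers together with the
odd numbers `≥ 3`; in particular it does not depend on `q`. -/
theorem lens_one_one_two_eigenvalue_spectrum
    (n q : ℕ) (hn : 2 ≤ n) (hq : 3 ≤ q)
    (s : Fin n → ℤ) (hs : ∀ i : Fin n, s i = if (i : ℕ) = n - 1 then 2 else 1)
    (N : ℕ → ℕ)
    (hN : ∀ k, N k = Set.ncard
      {a : Fin n → ℤ | (∑ i, (a i).natAbs) = k ∧ (q : ℤ) ∣ ∑ i, a i * s i})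
    (m : ℕ → ℕ)
    (hm : ∀ k, m k = ∑ r ∈ Finset.range (k / 2 + 1),
      Nat.choose (r + n - 2) (n - 2) * N (k - 2 * r)) :
    {k : ℕ | 0 < m k} = {k : ℕ | Even k} ∪ {k : ℕ | Odd k ∧ 3 ≤ k} := by
  -- finiteness of the sets
  have hfin : ∀ k : ℕ, {a : Fin n → ℤ |
      (∑ i, (a i).natAbs) = k ∧ (q : ℤ) ∣ ∑ i, a i * s i}.Finite := by
    intro k
    apply Set.Finite.subset
      (Set.Finite.pi (fun i : Fin n => Set.finite_Icc (-(k : ℤ)) (k : ℤ)))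
    rintro a ⟨h1, -⟩
    intro i _
    have : (a i).natAbs ≤ k := h1 ▸
      Finset.single_le_sum (f := fun j => (a j).natAbs)
        (fun j _ => Nat.zero_le _) (Finset.mem_univ i)
    simp only [Set.mem_Icc]
    omega
  -- N 1 = 0
  have hN1 : N 1 = 0 := by
    rw [hN 1]
    convert Set.ncard_empty (Fin n → ℤ)
    ext a
    simp only [Set.mem_setOf_eq, Set.mem_empty_iff_false, iff_false, not_and]
    intro h1 h2
    obtain ⟨i0, hi0⟩ : ∃ i0, (a i0).natAbs ≠ 0 := by
      by_contra h
      push_neg at h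
      rw [Finset.sum_eq_zero (fun j _ => h j)] at h1
      exact one_ne_zero h1.symm
    have hle : (a i0).natAbs ≤ 1 := h1 ▸
      Finset.single_le_sum (f := fun j => (a j).natAbs)
        (fun j _ => Nat.zero_le _) (Finset.mem_univ i0)
    have hrest : ∀ j, j ≠ i0 → a j = 0 := by
      have hz : ∑ j ∈ Finset.univ.erase i0, (a j).natAbs = 0 := by
        have h1' := h1
        rw [← Finset.add_sum_erase Finset.univ (fun j => (a j).natAbs)
          (Finset.mem_univ i0)] at h1'
        omega
      intro j hj
      have := (Finset.sum_eq_zero_iff.mp hz) j (Finset.mem_erase.mpr ⟨hj, Finset.mem_univ j⟩)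
      omega
    have hsum : ∑ i, a i * s i = a i0 * s i0 :=
      Finset.sum_eq_single_of_mem i0 (Finset.mem_univ i0)
        (fun j _ hj => by rw [hrest j hj, zero_mul])
    rw [hsum] at h2
    have hdvd : q ∣ (a i0 * s i0).natAbs := by
      have := Int.natAbs_dvd_natAbs.mpr h2
      simpa using this
    have hsabs : (s i0).natAbs ≤ 2 := by
      rw [hs i0]; split <;> simp
    have hsnz : (s i0).natAbs ≠ 0 := by
      rw [hs i0]; split <;> simp
    rw [Int.natAbs_mul] at hdvd
    have hpos : 0 < (a i0).natAbs * (s i0).natAbs := by positivity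
    have hq2 := Nat.le_of_dvd hpos hdvd
    have ha : (a i0).natAbs = 1 := by omega
    rw [ha, one_mul] at hq2
    omega
  -- N 0 > 0
  have hN0 : 0 < N 0 := by
    rw [hN 0]
    refine (Set.ncard_pos (hfin 0)).mpr ⟨0, ?_⟩
    simp
  -- N 3 > 0
  have hN3 : 0 < N 3 := by
    rw [hN 3]
    refine (Set.ncard_pos (hfin 3)).mpr ?_
    set i0 : Fin n := ⟨0, by omega⟩ with hi0def
    set i1 : Fin n := ⟨n - 1, by omega⟩ with hi1def
    have hne : i0 ≠ i1 := by
      intro h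
      have := congrArg (fun x : Fin n => (x : ℕ)) h
      simp [hi0def, hi1def] at this
      omega
    refine ⟨fun i => if i = i0 then 2 else if i = i1 then -1 else 0, ?_, ?_⟩
    · have key : ∀ (f : Fin n → ℕ), (∀ j, j ≠ i0 → j ≠ i1 → f j = 0) →
          ∑ i, f i = f i0 + f i1 := by
        intro f hf
        rw [← Finset.add_sum_erase Finset.univ f (Finset.mem_univ i0)]
        congr 1
        refine Finset.sum_eq_single_of_mem i1
          (Finset.mem_erase.mpr ⟨hne.symm, Finset.mem_univ i1⟩) ?_
        intro j hj hj1
        exact hf j (Finset.mem_erase.mp hj).1 hj1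
      rw [key _ (fun j hj0 hj1 => by simp [hj0, hj1])]
      simp [hne, hne.symm]
    · have key : ∀ (f : Fin n → ℤ), (∀ j, j ≠ i0 → j ≠ i1 → f j = 0) →
          ∑ i, f i = f i0 + f i1 := by
        intro f hf
        rw [← Finset.add_sum_erase Finset.univ f (Finset.mem_univ i0)]
        congr 1
        refine Finset.sum_eq_single_of_mem i1
          (Finset.mem_erase.mpr ⟨hne.symm, Finset.mem_univ i1⟩) ?_
        intro j hj hj1
        exact hf j (Finset.mem_erase.mp hj).1 hj1
      rw [key _ (fun j hj0 hj1 => by simp [hj0, hj1])]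
      have h0 : s i0 = 1 := by
        rw [hs i0]
        have : (i0 : ℕ) = 0 := rfl
        rw [this]
        simp only [ite_eq_right_iff]
        omega
      have h1 : s i1 = 2 := by
        rw [hs i1]
        simp [hi1def]
      simp [hne, hne.symm, h0, h1]
  -- positivity of a single term forces m k > 0
  have hterm : ∀ k r : ℕ, r ∈ Finset.range (k / 2 + 1) → 0 < N (k - 2 * r) → 0 < m k := by
    intro k r hr hpos
    rw [hm k]
    calc 0 < Nat.choose (r + n - 2) (n - 2) * N (k - 2 * r) :=
          Nat.mul_pos (Nat.choose_pos (by omega)) hpos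
      _ ≤ _ := Finset.single_le_sum (f := fun r => Nat.choose (r + n - 2) (n - 2) * N (k - 2 * r))
          (fun j _ => Nat.zero_le _) hr
  ext k
  simp only [Set.mem_setOf_eq, Set.mem_union]
  constructor
  · intro hk
    by_contra hcon
    push_neg at hcon
    obtain ⟨he, ho⟩ := hcon
    have hodd : Odd k := Nat.not_even_iff_odd.mp he
    have hk1 : k = 1 := by
      have h2 := ho hodd
      rcases hodd with ⟨c, hc⟩
      omega
    subst hk1
    rw [hm 1] at hk
    simp [hN1] at hk
  · rintro (he | ⟨ho, h3⟩)
    · obtain ⟨c, hc⟩ := he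
      refine hterm k (k / 2) (Finset.self_mem_range_succ _) ?_
      have : k - 2 * (k / 2) = 0 := by omega
      rw [this]
      exact hN0
    · obtain ⟨c, hc⟩ := ho
      refine hterm k ((k - 3) / 2) (Finset.mem_range.mpr (by omega)) ?_
      have : k - 2 * ((k - 3) / 2) = 3 := by omega
      rw [this]
      exact hN3
end

section
/- Let q ≥ 3 be an integer and let s = (1, 2, q) ∈ ℤ³. For k ∈ ℕ let N(k) denote the (finite) number of a = (a₁,a₂,a₃) ∈ ℤ³ with |a₁| + |a₂| + |a₃| = k and 2q ∣ (a₁ + 2a₂ + q·a₃), and let m_k = Σ_{r=0}^{⌊k/2⌋} binom(r+1, 1)·N(k−2r). Then {k ∈ ℕ : m_k > 0} = {k ∈ ℕ : k is even} ∪ {k ∈ ℕ : k is odd and k ≥ 3}. -/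
lemma lens_set_finite (q k : ℕ) :
    {a : Fin 3 → ℤ | ((a 0).natAbs + (a 1).natAbs + (a 2).natAbs) = k ∧
        ((2 * q : ℕ) : ℤ) ∣ (a 0 + 2 * a 1 + (q : ℤ) * a 2)}.Finite := by
  apply Set.Finite.subset (Set.Finite.pi (fun i : Fin 3 => Set.finite_Icc (-(k : ℤ)) k))
  intro a ha i _
  have h1 := ha.1
  have hi : i = 0 ∨ i = 1 ∨ i = 2 := by omega
  rcases hi with rfl | rfl | rfl <;> simp only [Set.mem_Icc] <;> constructor <;> omega

/-- The lens orbifold `L(2q; 1, 2, q)` (`q ≥ 3`) has positive eigenvalue multiplicity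
`m k` exactly for `k` even or `k` odd with `k ≥ 3`; hence it is eigenvalue equivalent
to the smooth lens spaces `L(q′; 1, 1, 2)`. -/
theorem lens_orbifold_eigenvalue_spectrum
    (q : ℕ) (hq : 3 ≤ q)
    (N : ℕ → ℕ)
    (hN : ∀ k, N k = Set.ncard
      {a : Fin 3 → ℤ | ((a 0).natAbs + (a 1).natAbs + (a 2).natAbs) = k ∧
        ((2 * q : ℕ) : ℤ) ∣ (a 0 + 2 * a 1 + (q : ℤ) * a 2)})
    (m : ℕ → ℕ)
    (hm : ∀ k, m k = ∑ r ∈ Finset.range (k / 2 + 1),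
      Nat.choose (r + 1) 1 * N (k - 2 * r)) :
    {k : ℕ | 0 < m k} = {k : ℕ | Even k} ∪ {k : ℕ | Odd k ∧ 3 ≤ k} := by
  have hN0 : 0 < N 0 := by
    rw [hN, Set.ncard_pos (lens_set_finite q 0)]
    exact ⟨0, by simp⟩
  have hN3 : 0 < N 3 := by
    rw [hN, Set.ncard_pos (lens_set_finite q 3)]
    refine ⟨![2, -1, 0], ?_, ?_⟩ <;> simp
  have hN1 : N 1 = 0 := by
    rw [hN]
    convert Set.ncard_empty (Fin 3 → ℤ)
    rw [Set.eq_empty_iff_forall_notMem]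
    rintro a ⟨h1, h2⟩
    have h2' : a 2 = 1 ∨ a 2 = 0 ∨ a 2 = -1 := by omega
    rcases h2' with h | h | h <;>
      rw [h] at h2 <;>
      simp only [mul_one, mul_zero, mul_neg_one, add_zero] at h2 <;>
      have h3 := Int.eq_zero_of_abs_lt_dvd h2 (by rw [abs_lt]; constructor <;> omega) <;>
      omega
  ext k
  simp only [Set.mem_setOf_eq, Set.mem_union]
  constructor
  · intro hk
    by_contra hcon
    push_neg at hcon
    obtain ⟨he, ho⟩ := hcon
    have hodd : Odd k := Nat.not_even_iff_odd.mp he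
    have h3 := ho hodd
    have hk1 : k = 1 := by obtain ⟨t, ht⟩ := hodd; omega
    subst hk1
    rw [hm] at hk
    simp [hN1] at hk
  · rintro (⟨t, rfl⟩ | ⟨⟨t, rfl⟩, h3⟩) <;> rw [hm] <;>
      apply Finset.sum_pos' (fun i _ => Nat.zero_le _)
    · refine ⟨t, Finset.mem_range.mpr (by omega), ?_⟩
      have h0 : t + t - 2 * t = 0 := by omega
      rw [h0, Nat.choose_one_right]
      exact Nat.mul_pos (by omega) hN0
    · refine ⟨t - 1, Finset.mem_range.mpr (by omega), ?_⟩
      have h0 : 2 * t + 1 - 2 * (t - 1) = 3 := by omega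
      rw [h0, Nat.choose_one_right]
      exact Nat.mul_pos (by omega) hN3
end

section
/- Let n ≥ 3 and r > 2 be coprime positive integers and let a = (a₁,…,aₙ) ∈ ℤⁿ. Suppose that a is not self-reversing mod r (i.e. the multiset of residues mod r of (a₁,…,aₙ) differs from the multiset of residues mod r of (−a₁,…,−aₙ)) and that r divides a₁ + ⋯ + aₙ. Then a is irreversible mod r, i.e. there is no c ∈ ℤ such that the multiset of residues mod r of (a₁+c,…,aₙ+c) equals the multiset of residues mod r of (−a₁,…,−aₙ). -/
/-- The multiset of residues mod `r` of the entries of the tuple `a`. -/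
def residues (r : ℕ) {n : ℕ} (a : Fin n → ℤ) : Multiset (ZMod r) :=
  (Finset.univ.val : Multiset (Fin n)).map fun i => ((a i : ZMod r))

lemma residues_sum (r : ℕ) {n : ℕ} (a : Fin n → ℤ) :
    (residues r a).sum = ∑ i, ((a i : ZMod r)) := by
  rfl

/-- If `a ∈ ℤⁿ` (with `n ≥ 3` coprime to `r > 2`) is not self-reversing mod `r` and the
sum of its entries is divisible by `r`, then `a` is irreversible mod `r`. -/
theorem irreversible_of_not_selfReversing_of_sum_dvd
    (n r : ℕ) (hn : 3 ≤ n) (hr : 2 < r) (hco : Nat.Coprime n r)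
    (a : Fin n → ℤ)
    (hself : residues r a ≠ residues r (fun i => -a i))
    (hsum : (r : ℤ) ∣ ∑ i, a i) :
    ¬ ∃ c : ℤ, residues r (fun i => a i + c) = residues r (fun i => -a i) := by
  rintro ⟨c, hc⟩
  have hs0 : (∑ i, ((a i : ZMod r))) = 0 := by
    have : ((∑ i, a i : ℤ) : ZMod r) = 0 := by
      exact_mod_cast (ZMod.intCast_zmod_eq_zero_iff_dvd _ r).mpr hsum
    simpa [Int.cast_sum] using this
  have hsums := congrArg Multiset.sum hc
  rw [residues_sum, residues_sum] at hsums
  simp only [Int.cast_add, Int.cast_neg, Finset.sum_add_distrib, Finset.sum_neg_distrib,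
    Finset.sum_const, Finset.card_univ, Fintype.card_fin, hs0, zero_add, neg_zero,
    nsmul_eq_mul] at hsums
  -- hsums : (n : ZMod r) * (c : ZMod r) = 0
  have hru : (0 : ℕ) < r := by omega
  haveI : NeZero r := ⟨by omega⟩
  have hnu : IsUnit (n : ZMod r) := (ZMod.isUnit_iff_coprime n r).mpr hco
  have hc0 : ((c : ZMod r)) = 0 := by
    have := hnu.mul_right_eq_zero.mp hsums
    exact this
  apply hself
  rw [← hc]
  unfold residues
  congr 1
  funext i
  push_cast
  rw [hc0, add_zero]
end

section
/- Let n ≥ 3 be an integer and let r be a prime number with r > n². Then the tuple a = (1, 2, …, n−1, r − n(n−1)/2) ∈ ℤⁿ is useful mod r; that is, a is good mod d for every positive divisor d of r, and a is not reversible mod r. -/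
/-- `a` is reversible mod `r` if for some shift `c` the multiset of residues of `a + c`
equals that of `-a`. -/
def Reversible (r : ℕ) {n : ℕ} (a : Fin n → ℤ) : Prop :=
  ∃ c : ℤ, residues r (fun i => a i + c) = residues r (fun i => -a i)

/-- `a` is univalent mod `r` if its entries are pairwise distinct mod `r`. -/
def Univalent (r : ℕ) {n : ℕ} (a : Fin n → ℤ) : Prop :=
  Function.Injective fun i : Fin n => ((a i : ZMod r))

/-- `a` is good mod `r` if it is univalent or reversible mod `r`. -/
def Good (r : ℕ) {n : ℕ} (a : Fin n → ℤ) : Prop :=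
  Univalent r a ∨ Reversible r a

/-- `a` is useful mod `r` if it is good mod every positive divisor of `r`
(hereditarily good) and irreversible mod `r`. -/
def Useful (r : ℕ) {n : ℕ} (a : Fin n → ℤ) : Prop :=
  (∀ d : ℕ, 0 < d → d ∣ r → Good d a) ∧ ¬ Reversible r a

/-- For `n ≥ 3` and a prime `r > n²`, the tuple `(1, 2, …, n−1, r − n(n−1)/2)` is
useful mod `r`. -/
theorem useful_tuple_of_prime_gt_sq
    (n r : ℕ) (hn : 3 ≤ n) (hp : r.Prime) (hr : n ^ 2 < r) :
    Useful r (fun i : Fin n =>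
      if (i : ℕ) = n - 1 then (r : ℤ) - (n * (n - 1) / 2 : ℕ) else (i : ℕ) + 1) := by
  obtain ⟨m, hm⟩ : ∃ m, n = m + 3 := ⟨n - 3, by omega⟩
  set a : Fin n → ℤ := fun i : Fin n =>
      if (i : ℕ) = n - 1 then (r : ℤ) - (n * (n - 1) / 2 : ℕ) else (i : ℕ) + 1 with ha
  set T : ℕ := n * (n - 1) / 2 with hTdef
  have h2dvd : 2 ∣ n * (n - 1) := by
    rcases Nat.even_or_odd n with h | h
    · exact Dvd.dvd.mul_right h.two_dvd _
    · refine Dvd.dvd.mul_left ?_ _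
      rw [Nat.odd_iff] at h
      omega
  have h2T : 2 * T = n * (n - 1) := Nat.mul_div_cancel' h2dvd
  have h2T' : 2 * T = (m + 3) * (m + 2) := by rw [h2T, hm]; congr 1
  have hsq : n ^ 2 = n * n := by ring
  have hTn : T + n ≤ n ^ 2 := by rw [hsq, hm]; nlinarith [h2T']
  have hT3 : 3 ≤ T := by nlinarith [h2T']
  have hnr : n < r := by nlinarith [hsq, hr, hn]
  -- univalence mod r
  have huni : Univalent r a := by
    intro i j h
    simp only at h
    have key : ∀ k l : Fin n, (a k : ZMod r) = (a l : ZMod r) → (k : ℕ) ≤ (l : ℕ) → k = l := by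
      intro k l h hkl
      by_cases hk : (k : ℕ) = n - 1
      · have hl : (l : ℕ) = n - 1 := by omega
        exact Fin.ext (by omega)
      · by_cases hl : (l : ℕ) = n - 1
        · -- a k = k+1, a l = r - T
          rw [ha] at h
          simp only [hk, hl, if_true, if_false, if_neg hk, if_pos hl] at h
          rw [ZMod.intCast_eq_intCast_iff_dvd_sub] at h
          have : ((r : ℤ)) ∣ ((r : ℤ) - T - ((k : ℕ) + 1)) := h
          have h2 : ((r : ℤ)) ∣ ((T : ℤ) + (k : ℕ) + 1) := by
            have := dvd_sub (dvd_refl (r : ℤ)) this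
            rw [show ((T : ℤ) + (k : ℕ) + 1) = (r : ℤ) - ((r : ℤ) - T - ((k : ℕ) + 1)) by omega]; exact this
          have hlt : (0 : ℤ) < (T : ℤ) + (k : ℕ) + 1 := by positivity
          have := Int.le_of_dvd hlt h2
          have hkn : (k : ℕ) < n := k.isLt
          exfalso; omega
        · rw [ha] at h
          simp only [if_neg hk, if_neg hl] at h
          rw [ZMod.intCast_eq_intCast_iff_dvd_sub] at h
          have hd : ((r : ℤ)) ∣ ((l : ℕ) : ℤ) - (k : ℕ) := by
            have := h; convert this using 1; ring
          have hkn : (k : ℕ) < n := k.isLt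
          have hln : (l : ℕ) < n := l.isLt
          have h0 : ((l : ℕ) : ℤ) - (k : ℕ) = 0 := by
            rcases Nat.lt_or_ge ((l : ℕ) - (k : ℕ)) r with hlt | hge
            · exact Int.eq_zero_of_dvd_of_nonneg_of_lt (by omega) (by omega) hd
            · exfalso; omega
          exact Fin.ext (by omega)
    rcases le_total (i : ℕ) (j : ℕ) with hle | hle
    · exact key i j h hle
    · exact (key j i h.symm hle).symm
  -- sum of the tuple is r
  have hsumZ : (∑ i : Fin n, a i) = (r : ℤ) := by
    have h1 : (∑ i : Fin n, a i) = ∑ i ∈ Finset.range n,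
        (if i = n - 1 then (r : ℤ) - T else (i : ℤ) + 1) := by
      rw [ha]
      exact Fin.sum_univ_eq_sum_range (fun i => if i = n - 1 then (r : ℤ) - T else (i : ℤ) + 1) n
    rw [h1]
    obtain ⟨k, hE⟩ : ∃ k, n = k + 1 := ⟨n - 1, by omega⟩
    rw [hE, Finset.sum_range_succ]
    simp only [Nat.add_sub_cancel]
    rw [Finset.sum_ite_of_false (by intro i hi; simp at hi; omega)]
    have e1 : ∑ i ∈ Finset.range (k + 1), i = (∑ i ∈ Finset.range k, (i + 1)) + 0 :=
      Finset.sum_range_succ' (fun i => i) k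
    have e2 : ∑ i ∈ Finset.range (k + 1), i = (k + 1) * ((k + 1) - 1) / 2 :=
      Finset.sum_range_id (k + 1)
    have e3 : T = (k + 1) * ((k + 1) - 1) / 2 := by rw [hTdef, hE]
    have hnat : (∑ i ∈ Finset.range k, (i + 1)) = T := by omega
    have hg : (∑ i ∈ Finset.range k, ((i : ℤ) + 1)) = T := by
      rw [← hnat]; push_cast; rfl
    rw [if_pos trivial, hg]; ring
  -- irreversibility mod r
  have hirrev : ¬ Reversible r a := by
    rintro ⟨c, hc⟩
    -- sums agree
    have hsum := congrArg Multiset.sum hc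
    simp only [residues] at hsum
    rw [← Finset.sum_eq_multiset_sum, ← Finset.sum_eq_multiset_sum] at hsum
    have hL : (∑ i : Fin n, (((a i + c : ℤ)) : ZMod r))
        = ((n : ZMod r)) * (c : ZMod r) := by
      simp only [Int.cast_add]
      rw [Finset.sum_add_distrib, ← Int.cast_sum, hsumZ, Finset.sum_const,
        Finset.card_univ, Fintype.card_fin]
      push_cast [ZMod.natCast_self]
      ring
    have hR : (∑ i : Fin n, (((-a i : ℤ)) : ZMod r)) = 0 := by
      simp only [Int.cast_neg]
      rw [Finset.sum_neg_distrib, ← Int.cast_sum, hsumZ]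
      simp [ZMod.natCast_self]
    rw [hL, hR] at hsum
    haveI : Fact r.Prime := ⟨hp⟩
    have hc0 : (c : ZMod r) = 0 := by
      rcases mul_eq_zero.mp hsum with h0 | h0
      · exfalso
        rw [ZMod.natCast_eq_zero_iff] at h0
        have := Nat.le_of_dvd (by omega) h0
        omega
      · exact h0
    -- hence residues of a equal residues of -a
    have hca : residues r (fun i => a i + c) = residues r a := by
      unfold residues
      refine Multiset.map_congr rfl fun i _ => ?_
      push_cast [hc0]
      ring
    rw [hca] at hc
    -- 1 is in residues of a
    have hmem : (1 : ZMod r) ∈ residues r a := by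
      simp only [residues, Multiset.mem_map]
      refine ⟨⟨0, by omega⟩, Finset.mem_univ_val _, ?_⟩
      rw [ha]
      simp only [Fin.val_mk]
      rw [if_neg (by omega)]
      norm_num
    rw [hc] at hmem
    simp only [residues, Multiset.mem_map] at hmem
    obtain ⟨i, -, hi⟩ := hmem
    by_cases hk : (i : ℕ) = n - 1
    · rw [ha] at hi
      simp only [hk, if_pos] at hi
      rw [show (-((r : ℤ) - T)) = ((- (r : ℤ) + T : ℤ)) by ring] at hi
      rw [show (1 : ZMod r) = ((1 : ℤ) : ZMod r) by norm_num,
        ZMod.intCast_eq_intCast_iff_dvd_sub] at hi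
      have h2 : ((r : ℤ)) ∣ ((T : ℤ) - 1) := by
        have h3 : (T : ℤ) - 1 = -(1 - (-(r : ℤ) + T)) + r := by ring
        rw [h3]; exact dvd_add (dvd_neg.mpr hi) (dvd_refl _)
      have := Int.le_of_dvd (by omega) h2
      omega
    · rw [ha] at hi
      simp only [if_neg hk] at hi
      rw [show (1 : ZMod r) = ((1 : ℤ) : ZMod r) by norm_num,
        ZMod.intCast_eq_intCast_iff_dvd_sub] at hi
      have h2 : ((r : ℤ)) ∣ ((i : ℕ) : ℤ) + 2 := by
        have h3 : ((i : ℕ) : ℤ) + 2 = 1 - (-(((i : ℕ) : ℤ) + 1)) := by ring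
        rw [h3]; exact hi
      have := Int.le_of_dvd (by positivity) h2
      have hkn : (i : ℕ) < n := i.isLt
      omega
  refine ⟨fun d hd hdvd => ?_, hirrev⟩
  rcases (Nat.Prime.eq_one_or_self_of_dvd hp d hdvd) with rfl | rfl
  · right
    exact ⟨0, Multiset.map_congr rfl fun i _ => Subsingleton.elim _ _⟩
  · left
    exact huni
end

section
/- Let q ≥ 3 and n ≥ 1 be integers, ζ = exp(2πi/q) ∈ ℂ, q₀ = φ(q)/2 where φ is Euler's totient function, and let t₁,…,t_{q₀} be integers such that every integer coprime to q is congruent mod q to exactly one element of {t₁,…,t_{q₀}, −t₁,…,−t_{q₀}}. Let r ≥ 1 be an integer and let s = (s₁,…,sₙ), s′ = (s′₁,…,s′ₙ) ∈ ℤⁿ with gcd(q, sᵢ) = gcd(q, s′ᵢ) = 1 for all i. For an integer m ≥ 1 and u ∈ ℤᵐ define, for z ∈ ℂ with z^q ≠ 1, F_u(z) = ((1−z²)/q)·Σ_{h=0}^{q−1} ∏_{i=1}^{m} ((z − ζ^{h·uᵢ})·(z − ζ^{−h·uᵢ}))⁻¹. If F_s(z) = F_{s′}(z) for every z ∈ ℂ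 with z^q ≠ 1, then F_{s⁀r·t}(z) = F_{s′⁀r·t}(z) for every z ∈ ℂ with z^q ≠ 1, where s⁀r·t ∈ ℤ^{n+r·q₀} denotes s followed by r consecutive copies of (t₁,…,t_{q₀}). -/
open scoped Real

/-- Ikeda's generating function `F_u(z)` of the lens space with parameters `u` mod `q`:
`F_u(z) = ((1−z²)/q)·Σ_{h=0}^{q−1} ∏ᵢ ((z − ζ^{h·uᵢ})(z − ζ^{−h·uᵢ}))⁻¹`,
where `ζ = exp(2πi/q)`.  The parameter tuple is indexed by an arbitrary finite type. -/
noncomputable def ikedaF (q : ℕ) {ι : Type*} [Fintype ι] (u : ι → ℤ) (z : ℂ) : ℂ :=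
  ((1 - z ^ 2) / q) * ∑ h ∈ Finset.range q,
    (∏ i, ((z - Complex.exp (2 * π * Complex.I / q) ^ ((h : ℤ) * u i)) *
      (z - Complex.exp (2 * π * Complex.I / q) ^ (-((h : ℤ) * u i)))))⁻¹

namespace IkedaAux
open Polynomial

noncomputable def ikZ (q : ℕ) : ℂ := Complex.exp (2 * π * Complex.I / q)
noncomputable def ikzp (q : ℕ) (k : ℤ) : ℂ := ikZ q ^ k
noncomputable def iklin (q : ℕ) (k : ℤ) : ℂ[X] := X - C (ikzp q k)
noncomputable def ikPsi (q d : ℕ) : ℂ[X] :=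
  ∏ k ∈ (Finset.range q).filter (fun k => Nat.gcd k q = d), iklin q (k : ℤ)
noncomputable def ikD (q : ℕ) {ι : Type*} [Fintype ι] (u : ι → ℤ) (h : ℕ) : ℂ[X] :=
  ∏ i, (iklin q ((h : ℤ) * u i) * iklin q (-((h : ℤ) * u i)))

theorem ikgcd_emod (a q : ℤ) : Int.gcd (a % q) q = Int.gcd a q := by
  apply Nat.dvd_antisymm <;> rw [← Int.natCast_dvd_natCast] <;> apply Int.dvd_coe_gcd
  · have h := Int.emod_add_mul_ediv a q
    have h1 : (Int.gcd (a % q) q : ℤ) ∣ a % q := Int.gcd_dvd_left _ _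
    have h2 : (Int.gcd (a % q) q : ℤ) ∣ q := Int.gcd_dvd_right _ _
    calc (Int.gcd (a % q) q : ℤ) ∣ a % q + q * (a / q) := dvd_add h1 (h2.mul_right _)
      _ = a := h
  · exact Int.gcd_dvd_right _ _
  · have h1 : (Int.gcd a q : ℤ) ∣ a := Int.gcd_dvd_left _ _
    have h2 : (Int.gcd a q : ℤ) ∣ q := Int.gcd_dvd_right _ _
    have : (Int.gcd a q : ℤ) ∣ a - q * (a / q) := dvd_sub h1 (h2.mul_right _)
    simpa [Int.emod_def] using this
  · exact Int.gcd_dvd_right _ _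

section
variable {q : ℕ}

theorem ikprim (hq : q ≠ 0) : IsPrimitiveRoot (ikZ q) q := Complex.isPrimitiveRoot_exp q hq

theorem ikZ_ne_zero : ikZ q ≠ 0 := Complex.exp_ne_zero _

theorem ikzp_congr (hq : q ≠ 0) {a b : ℤ} (h : a ≡ b [ZMOD q]) : ikzp q a = ikzp q b := by
  obtain ⟨c, hc⟩ := Int.ModEq.dvd h
  have hb : b = a + q * c := by linarith
  rw [ikzp, ikzp, hb, zpow_add₀ ikZ_ne_zero, zpow_mul, zpow_natCast,
    (ikprim hq).pow_eq_one, one_zpow, mul_one]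

theorem ikzp_pow_q (hq : q ≠ 0) (k : ℤ) : (ikzp q k) ^ q = 1 := by
  rw [ikzp, ← zpow_natCast, ← zpow_mul, mul_comm, zpow_mul, zpow_natCast,
    (ikprim hq).pow_eq_one, one_zpow]

theorem eval_iklin_ne (hq : q ≠ 0) {z : ℂ} (hz : z ^ q ≠ 1) (k : ℤ) :
    eval z (iklin q k) ≠ 0 := by
  simp only [iklin, eval_sub, eval_X, eval_C, sub_ne_zero]
  intro heq
  exact hz (heq ▸ ikzp_pow_q hq k)

theorem iklin_monic (k : ℤ) : (iklin q k).Monic := monic_X_sub_C _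

theorem iklin_congr (hq : q ≠ 0) {a b : ℤ} (h : a ≡ b [ZMOD q]) :
    iklin q a = iklin q b := by rw [iklin, iklin, ikzp_congr hq h]

theorem ikPsi_monic (d : ℕ) : (ikPsi q d).Monic :=
  monic_prod_of_monic _ _ fun k _ => iklin_monic _

theorem eval_ikPsi_ne (hq : q ≠ 0) {z : ℂ} (hz : z ^ q ≠ 1) (d : ℕ) :
    eval z (ikPsi q d) ≠ 0 := by
  rw [ikPsi, eval_prod]
  exact Finset.prod_ne_zero_iff.mpr fun k _ => eval_iklin_ne hq hz _

theorem iklin_dvd_ikPsi (hq : q ≠ 0) {k : ℤ} {d : ℕ} (hd : Int.gcd k q = d) :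
    iklin q k ∣ ikPsi q d := by
  have hq' : (0 : ℤ) < q := by exact_mod_cast Nat.pos_of_ne_zero hq
  set k' : ℕ := (k % q).toNat with hk'
  have hnn : 0 ≤ k % (q : ℤ) := Int.emod_nonneg k (by exact_mod_cast hq)
  have hcast : (k' : ℤ) = k % q := Int.toNat_of_nonneg hnn
  have hlt : k' < q := by
    rw [← Nat.cast_lt (α := ℤ), hcast]
    exact Int.emod_lt_of_pos k hq'
  have hmod : k ≡ (k' : ℤ) [ZMOD q] := by
    unfold Int.ModEq
    rw [hcast, Int.emod_emod_of_dvd k (dvd_refl (q : ℤ))]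
  have hgcd : Nat.gcd k' q = d := by
    rw [← Int.gcd_natCast_natCast, hcast, ikgcd_emod, hd]
  have hmem : k' ∈ (Finset.range q).filter (fun k => Nat.gcd k q = d) := by
    simp [Finset.mem_filter, Finset.mem_range, hlt, hgcd]
  rw [iklin_congr hq hmod, ikPsi]
  exact Finset.dvd_prod_of_mem _ hmem

theorem ikPsi_coprime (hq : q ≠ 0) {d d' : ℕ} (h : d ≠ d') :
    IsCoprime (ikPsi q d) (ikPsi q d') := by
  rw [ikPsi, ikPsi]
  apply IsCoprime.prod_left; intro k hk
  apply IsCoprime.prod_right; intro k' hk'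
  simp only [Finset.mem_filter, Finset.mem_range] at hk hk'
  have hne : ikzp q (k : ℤ) ≠ ikzp q (k' : ℤ) := by
    simp only [ikzp, zpow_natCast]
    intro heq
    exact h (by rw [← hk.2, ← hk'.2, (ikprim hq).pow_inj hk.1 hk'.1 heq])
  exact Polynomial.pairwise_coprime_X_sub_C (Function.injective_id (α := ℂ)) hne

theorem ikgcd_mul {u : ℤ} (hu : Int.gcd (q : ℤ) u = 1) (h : ℕ) :
    Int.gcd ((h : ℤ) * u) (q : ℤ) = Nat.gcd h q := by
  have hcop : Nat.Coprime u.natAbs q := by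
    have := Int.gcd_comm (q : ℤ) u ▸ hu
    simpa [Int.gcd] using this
  have habs : ((h : ℤ) * u).natAbs = h * u.natAbs := by
    rw [Int.natAbs_mul]; simp
  simp only [Int.gcd, habs]
  simpa using Nat.Coprime.gcd_mul_right_cancel h hcop

theorem ikgcd_neg (a : ℤ) (b : ℤ) : Int.gcd (-a) b = Int.gcd a b := by
  simp [Int.gcd, Int.natAbs_neg]

theorem ikD_monic {ι : Type*} [Fintype ι] (u : ι → ℤ) (h : ℕ) : (ikD q u h).Monic :=
  monic_prod_of_monic _ _ fun _ _ => (iklin_monic _).mul (iklin_monic _)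

theorem ikD_natDegree {ι : Type*} [Fintype ι] (u : ι → ℤ) (h : ℕ) :
    (ikD q u h).natDegree = 2 * Fintype.card ι := by
  rw [ikD, natDegree_prod _ _ (fun i _ => ((iklin_monic _).mul (iklin_monic _)).ne_zero)]
  have hdeg : ∀ i : ι, (iklin q ((h : ℤ) * u i) * iklin q (-((h : ℤ) * u i))).natDegree = 2 := by
    intro i
    rw [natDegree_mul (iklin_monic _).ne_zero (iklin_monic _).ne_zero]
    simp [iklin]
  rw [Finset.sum_congr rfl (fun i _ => hdeg i), Finset.sum_const, Finset.card_univ,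
    smul_eq_mul, mul_comm]

theorem ikD_dvd (hq : q ≠ 0) {ι : Type*} [Fintype ι] {u : ι → ℤ}
    (hu : ∀ i, Int.gcd (q : ℤ) (u i) = 1) (h : ℕ) :
    ikD q u h ∣ ikPsi q (Nat.gcd h q) ^ (2 * Fintype.card ι) := by
  have key : ∀ i : ι, (iklin q ((h : ℤ) * u i) * iklin q (-((h : ℤ) * u i)))
      ∣ ikPsi q (Nat.gcd h q) ^ 2 := by
    intro i
    have h1 : Int.gcd ((h : ℤ) * u i) (q : ℤ) = Nat.gcd h q := ikgcd_mul (hu i) h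
    have h2 : Int.gcd (-((h : ℤ) * u i)) (q : ℤ) = Nat.gcd h q := by rw [ikgcd_neg]; exact h1
    rw [sq]
    exact mul_dvd_mul (iklin_dvd_ikPsi hq h1) (iklin_dvd_ikPsi hq h2)
  calc ikD q u h ∣ ∏ _i : ι, ikPsi q (Nat.gcd h q) ^ 2 :=
        Finset.prod_dvd_prod_of_dvd _ _ fun i _ => key i
    _ = ikPsi q (Nat.gcd h q) ^ (2 * Fintype.card ι) := by
        rw [Finset.prod_const, ← pow_mul, Finset.card_univ, mul_comm]

theorem ikdiv {A B : ℂ[X]} (hB : B.Monic) (h : B ∣ A) : B * (A /ₘ B) = A := by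
  have h0 := Polynomial.modByMonic_add_div A B
  rwa [(Polynomial.modByMonic_eq_zero_iff_dvd hB).mpr h, zero_add] at h0

theorem ikedaF_eval {ι : Type*} [Fintype ι] (u : ι → ℤ) (z : ℂ) :
    ikedaF q u z = ((1 - z ^ 2) / q) * ∑ h ∈ Finset.range q, (eval z (ikD q u h))⁻¹ := by
  simp [ikedaF, ikD, iklin, ikzp, ikZ, eval_prod]

noncomputable def ikvv [NeZero q] (x : (ZMod q)ˣ) : ℤ := ((x : ZMod q).val : ℤ)

noncomputable def ikBU (q : ℕ) [NeZero q] (w : ℤ) : ℂ[X] :=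
  ∏ x : (ZMod q)ˣ, iklin q (w * ikvv x)

theorem ikvv_cast [NeZero q] (x : (ZMod q)ˣ) : ((ikvv x : ℤ) : ZMod q) = (x : ZMod q) := by
  rw [ikvv]
  push_cast
  rw [ZMod.natCast_val, ZMod.cast_id]

theorem ikBU_monic [NeZero q] (w : ℤ) : (ikBU q w).Monic :=
  monic_prod_of_monic _ _ fun _ _ => iklin_monic _

theorem ikBU_gcd [NeZero q] (h : ℕ) : ikBU q (h : ℤ) = ikBU q (Nat.gcd h q : ℤ) := by
  have hq : q ≠ 0 := NeZero.ne q
  set d := Nat.gcd h q with hdd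
  have hd0 : 0 < d := Nat.gcd_pos_of_pos_right h (Nat.pos_of_ne_zero hq)
  have hdq : d ∣ q := Nat.gcd_dvd_right h q
  have hdh : d ∣ h := Nat.gcd_dvd_left h q
  set a := h / d with ha
  have hha : h = d * a := (Nat.mul_div_cancel' hdh).symm
  have hcop : Nat.Coprime a (q / d) := by
    have := Nat.coprime_div_gcd_div_gcd (m := h) (n := q) hd0
    simpa [← hdd, ← ha] using this
  have hmulqd : d * (q / d) = q := Nat.mul_div_cancel' hdq
  have hqd0 : q / d ≠ 0 := by
    intro h0
    rw [h0, mul_zero] at hmulqd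
    exact hq hmulqd.symm
  haveI : NeZero (q / d) := ⟨hqd0⟩
  obtain ⟨c, hc⟩ := ZMod.unitsMap_surjective (Nat.div_dvd_of_dvd hdq)
    (ZMod.unitOfCoprime a hcop)
  have key1 : ((ikvv c : ℤ) : ZMod (q / d)) = ((a : ℤ) : ZMod (q / d)) := by
    have h1 : ((ZMod.unitsMap (Nat.div_dvd_of_dvd hdq) c : (ZMod (q/d))ˣ) : ZMod (q/d))
        = ((c : ZMod q).cast : ZMod (q/d)) := by
      rw [ZMod.unitsMap_def]
      simp [ZMod.castHom_apply]
    rw [hc, ZMod.coe_unitOfCoprime] at h1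
    rw [ikvv]
    push_cast
    rw [ZMod.natCast_val, ← h1]
  have key2 : (ikvv c) ≡ (a : ℤ) [ZMOD ((q / d : ℕ) : ℤ)] :=
    (ZMod.intCast_eq_intCast_iff _ _ _).mp key1
  have hfac : ∀ x : (ZMod q)ˣ,
      iklin q ((h : ℤ) * ikvv x) = iklin q ((d : ℤ) * ikvv (c * x)) := by
    intro x
    apply iklin_congr hq
    have m2 : (a : ℤ) * ikvv x ≡ ikvv c * ikvv x [ZMOD ((q / d : ℕ) : ℤ)] :=
      Int.ModEq.mul_right _ key2.symm
    have m3 : (d : ℤ) * ((a : ℤ) * ikvv x) ≡ (d : ℤ) * (ikvv c * ikvv x)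
        [ZMOD ((d : ℤ) * ((q / d : ℕ) : ℤ))] := Int.ModEq.mul_left' m2
    have m4 : (d : ℤ) * ((q / d : ℕ) : ℤ) = (q : ℤ) := by exact_mod_cast hmulqd
    rw [m4] at m3
    have m5 : ikvv c * ikvv x ≡ ikvv (c * x) [ZMOD (q : ℤ)] := by
      rw [← ZMod.intCast_eq_intCast_iff]
      push_cast [ikvv_cast]
      simp
    calc (h : ℤ) * ikvv x = (d : ℤ) * ((a : ℤ) * ikvv x) := by
          rw [hha]; push_cast; ring
      _ ≡ (d : ℤ) * (ikvv c * ikvv x) [ZMOD (q : ℤ)] := m3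
      _ ≡ (d : ℤ) * ikvv (c * x) [ZMOD (q : ℤ)] := Int.ModEq.mul_left _ m5
  calc ikBU q (h : ℤ) = ∏ x : (ZMod q)ˣ, iklin q ((d : ℤ) * ikvv (c * x)) := by
        rw [ikBU]; exact Finset.prod_congr rfl fun x _ => hfac x
    _ = ∏ x : (ZMod q)ˣ, iklin q ((d : ℤ) * ikvv x) :=
        Equiv.prod_comp (Equiv.mulLeft c) (fun y => iklin q ((d : ℤ) * ikvv y))
    _ = ikBU q (d : ℤ) := rfl

theorem ikBU_dvd [NeZero q] {d : ℕ} (hd : d ∣ q) :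
    ikBU q (d : ℤ) ∣ ikPsi q d ^ Fintype.card (ZMod q)ˣ := by
  have hq : q ≠ 0 := NeZero.ne q
  have key : ∀ x : (ZMod q)ˣ, iklin q ((d : ℤ) * ikvv x) ∣ ikPsi q d := by
    intro x
    apply iklin_dvd_ikPsi hq
    have hcop : Nat.Coprime ((x : ZMod q).val) q := ZMod.val_coe_unit_coprime x
    have habs : ((d : ℤ) * ikvv x).natAbs = d * (x : ZMod q).val := by
      rw [ikvv, Int.natAbs_mul, Int.natAbs_natCast, Int.natAbs_natCast]
    simp only [Int.gcd, habs, Int.natAbs_natCast]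
    rw [Nat.Coprime.gcd_mul_right_cancel d hcop]
    exact Nat.gcd_eq_left hd
  calc ikBU q (d : ℤ) ∣ ∏ _x : (ZMod q)ˣ, ikPsi q d :=
        Finset.prod_dvd_prod_of_dvd _ _ fun x _ => key x
    _ = ikPsi q d ^ Fintype.card (ZMod q)ˣ := by
        rw [Finset.prod_const, Finset.card_univ]

theorem ik_units_equiv [NeZero q] {q₀ : ℕ} (hcard : Fintype.card (ZMod q)ˣ = q₀ * 2)
    (t : Fin q₀ → ℤ)
    (ht : ∀ m : ℤ, Int.gcd m q = 1 → ∃! p : Fin q₀ × Bool,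
      (m : ZMod q) = if p.2 then ((t p.1 : ℤ) : ZMod q) else -((t p.1 : ℤ) : ZMod q)) :
    ∃ e : (ZMod q)ˣ ≃ Fin q₀ × Bool, ∀ x : (ZMod q)ˣ,
      (x : ZMod q) = (if (e x).2 then ((t (e x).1 : ℤ) : ZMod q)
        else -((t (e x).1 : ℤ) : ZMod q)) := by
  have hg : ∀ x : (ZMod q)ˣ, ∃ p : Fin q₀ × Bool, (x : ZMod q) =
      (if p.2 then ((t p.1 : ℤ) : ZMod q) else -((t p.1 : ℤ) : ZMod q)) := by
    intro x
    have hcop : Int.gcd (ikvv x) q = 1 := by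
      rw [ikvv, Int.gcd_natCast_natCast]
      exact ZMod.val_coe_unit_coprime x
    obtain ⟨p, hp, -⟩ := ht (ikvv x) hcop
    exact ⟨p, by rwa [ikvv_cast] at hp⟩
  choose g hgspec using hg
  have hinj : Function.Injective g := by
    intro x y hxy
    have : (x : ZMod q) = (y : ZMod q) := by rw [hgspec x, hgspec y, hxy]
    exact Units.ext this
  have hbij : Function.Bijective g := by
    rw [Fintype.bijective_iff_injective_and_card]
    exact ⟨hinj, by simp [hcard]⟩
  exact ⟨Equiv.ofBijective g hbij, fun x => hgspec x⟩

theorem ikD_append [NeZero q] {n q₀ r : ℕ} (s : Fin n → ℤ) (t : Fin q₀ → ℤ)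
    (e : (ZMod q)ˣ ≃ Fin q₀ × Bool)
    (he : ∀ x : (ZMod q)ˣ, (x : ZMod q) = (if (e x).2 then ((t (e x).1 : ℤ) : ZMod q)
      else -((t (e x).1 : ℤ) : ZMod q)))
    (h : ℕ) :
    ikD q (Sum.elim s fun p : Fin r × Fin q₀ => t p.2) h
      = ikD q s h * ikBU q (h : ℤ) ^ r := by
  have hq : q ≠ 0 := NeZero.ne q
  rw [ikD, Fintype.prod_sum_type]
  congr 1
  set fi : Fin q₀ × Bool → ℤ := fun p => if p.2 then t p.1 else -(t p.1) with hfi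
  have step1 : ∀ j : Fin q₀,
      iklin q ((h : ℤ) * t j) * iklin q (-((h : ℤ) * t j))
        = iklin q ((h : ℤ) * fi (j, true)) * iklin q ((h : ℤ) * fi (j, false)) := by
    intro j
    simp only [hfi, if_pos, if_neg, Bool.false_eq_true, ite_true, ite_false, mul_neg]
  have step2 : ∀ x : (ZMod q)ˣ,
      iklin q ((h : ℤ) * fi (e x)) = iklin q ((h : ℤ) * ikvv x) := by
    intro x
    apply iklin_congr hq
    apply Int.ModEq.mul_left
    rw [← ZMod.intCast_eq_intCast_iff, ikvv_cast, he x, hfi]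
    by_cases hb : (e x).2 <;> simp [hb]
  calc (∏ p : Fin r × Fin q₀, (iklin q ((h : ℤ) * t p.2) * iklin q (-((h : ℤ) * t p.2))))
      = ∏ _a : Fin r, ∏ j : Fin q₀,
          (iklin q ((h : ℤ) * t j) * iklin q (-((h : ℤ) * t j))) := by
        rw [Fintype.prod_prod_type]
    _ = (∏ j : Fin q₀, (iklin q ((h : ℤ) * t j) * iklin q (-((h : ℤ) * t j)))) ^ r := by
        rw [Finset.prod_const, Finset.card_univ, Fintype.card_fin]
    _ = (∏ p : Fin q₀ × Bool, iklin q ((h : ℤ) * fi p)) ^ r := by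
        rw [Fintype.prod_prod_type]
        exact congrArg (· ^ r) (Finset.prod_congr rfl fun j _ => by
          rw [step1 j, Fintype.prod_bool])
    _ = (∏ x : (ZMod q)ˣ, iklin q ((h : ℤ) * ikvv x)) ^ r := by
        rw [← Equiv.prod_comp e (fun p => iklin q ((h : ℤ) * fi p))]
        exact congrArg (· ^ r) (Finset.prod_congr rfl fun x _ => step2 x)
    _ = ikBU q (h : ℤ) ^ r := rfl

end
end IkedaAux

open IkedaAux Polynomial in
/-- If the lens spaces `L(q;s)` and `L(q;s′)` are isospectral (equal Ikeda generating
functions away from `q`-th roots of unity), then so are the lens spaces obtained by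
appending `r` copies of a representative set `t(q) = (t₁,…,t_{q₀})` of the units mod `q`
up to sign, where `q₀ = φ(q)/2`. -/
theorem ikedaF_append_reps_eq
    (q n q₀ r : ℕ) (hq : 3 ≤ q) (hn : 1 ≤ n) (hr : 1 ≤ r)
    (hq₀ : q₀ = Nat.totient q / 2)
    (t : Fin q₀ → ℤ)
    (ht : ∀ m : ℤ, Int.gcd m q = 1 → ∃! p : Fin q₀ × Bool,
      (m : ZMod q) = if p.2 then ((t p.1 : ℤ) : ZMod q) else -((t p.1 : ℤ) : ZMod q))
    (s s' : Fin n → ℤ)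
    (hs : ∀ i, Int.gcd (q : ℤ) (s i) = 1) (hs' : ∀ i, Int.gcd (q : ℤ) (s' i) = 1)
    (hiso : ∀ z : ℂ, z ^ q ≠ 1 → ikedaF q s z = ikedaF q s' z) :
    ∀ z : ℂ, z ^ q ≠ 1 →
      ikedaF q (Sum.elim s fun p : Fin r × Fin q₀ => t p.2) z
        = ikedaF q (Sum.elim s' fun p : Fin r × Fin q₀ => t p.2) z := by
  have hq0 : q ≠ 0 := by omega
  haveI : NeZero q := ⟨hq0⟩
  classical
  set dvs := q.divisors with hdvs
  set E : (Fin n → ℤ) → ℕ → Polynomial ℂ :=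
    fun u h => (ikPsi q (Nat.gcd h q) ^ (2 * n)) /ₘ (ikD q u h) with hEdef
  have hE : ∀ (u : Fin n → ℤ), (∀ i, Int.gcd (q : ℤ) (u i) = 1) → ∀ h : ℕ,
      ikD q u h * E u h = ikPsi q (Nat.gcd h q) ^ (2 * n) := by
    intro u hu h
    apply ikdiv (ikD_monic u h)
    have hd := ikD_dvd hq0 hu h
    rwa [Fintype.card_fin] at hd
  set fib : ℕ → Finset ℕ :=
    fun d => (Finset.range q).filter (fun h => Nat.gcd h q = d) with hfib
  have hmaps : ∀ h ∈ Finset.range q, Nat.gcd h q ∈ dvs := fun h _ =>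
    Nat.mem_divisors.mpr ⟨Nat.gcd_dvd_right h q, hq0⟩
  have hDne : ∀ {z : ℂ}, z ^ q ≠ 1 → ∀ {ι : Type} [Fintype ι] (u : ι → ℤ) (h : ℕ),
      eval z (ikD q u h) ≠ 0 := by
    intro z hz ι _ u h
    rw [ikD, eval_prod]
    refine Finset.prod_ne_zero_iff.mpr fun i _ => ?_
    rw [eval_mul]
    exact mul_ne_zero (eval_iklin_ne hq0 hz _) (eval_iklin_ne hq0 hz _)
  -- Step B : the per-divisor-class partial sums of cofactors agree
  have key : ∀ d ∈ dvs, (∑ h ∈ fib d, E s h) = (∑ h ∈ fib d, E s' h) := by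
    set T : ℕ → Polynomial ℂ := fun d => ∑ h ∈ fib d, (E s h - E s' h) with hT
    set P : ℕ → Polynomial ℂ := fun d => ∏ d' ∈ dvs.erase d, ikPsi q d' ^ (2 * n) with hP
    set W : Polynomial ℂ := ∏ d ∈ dvs, ikPsi q d ^ (2 * n) with hW
    have hWP : ∀ d ∈ dvs, ikPsi q d ^ (2 * n) * P d = W := by
      intro d hd
      simp only [hP, hW]
      exact Finset.mul_prod_erase dvs (fun d' => ikPsi q d' ^ (2 * n)) hd
    have hPP : (∑ d ∈ dvs, T d * P d) = 0 := by
      apply Polynomial.eq_zero_of_infinite_isRoot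
      have hne1 : ∀ m : ℕ, m ≠ 0 → ((Polynomial.X : Polynomial ℂ) ^ m - 1) ≠ 0 := by
        intro m hm
        have hmon := Polynomial.monic_X_pow_sub_C (R := ℂ) 1 hm
        simpa using hmon.ne_zero
      have hfin : ({z : ℂ | z ^ q = 1} ∪ {z : ℂ | z ^ 2 = 1}).Finite := by
        apply Set.Finite.union
        · refine Set.Finite.subset (Polynomial.finite_setOf_isRoot (hne1 q hq0)) ?_
          intro z hzz
          simp only [Set.mem_setOf_eq] at hzz
          simp [Polynomial.IsRoot.def, hzz]
        · refine Set.Finite.subset (Polynomial.finite_setOf_isRoot (hne1 2 two_ne_zero)) ?_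
          intro z hzz
          simp only [Set.mem_setOf_eq] at hzz
          simp [Polynomial.IsRoot.def, hzz]
      refine Set.Infinite.mono ?_ hfin.infinite_compl
      intro z hzc
      simp only [Set.mem_compl_iff, Set.mem_union, Set.mem_setOf_eq, not_or] at hzc
      obtain ⟨hz1, hz2⟩ := hzc
      show Polynomial.IsRoot _ z
      rw [Polynomial.IsRoot.def, eval_finset_sum]
      have hpref : ((1 : ℂ) - z ^ 2) / q ≠ 0 :=
        div_ne_zero (sub_ne_zero.mpr fun hcon => hz2 hcon.symm) (Nat.cast_ne_zero.mpr hq0)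
      have hsum : (∑ h ∈ Finset.range q, (eval z (ikD q s h))⁻¹)
          = ∑ h ∈ Finset.range q, (eval z (ikD q s' h))⁻¹ := by
        have hzz := hiso z hz1
        rw [ikedaF_eval, ikedaF_eval] at hzz
        exact mul_left_cancel₀ hpref hzz
      have hterm : ∀ (u : Fin n → ℤ), (∀ i, Int.gcd (q : ℤ) (u i) = 1) →
          ∀ d ∈ dvs, ∀ h ∈ fib d,
          eval z (E u h) * eval z (P d) = eval z W * (eval z (ikD q u h))⁻¹ := by
        intro u hu d hd h hh
        have hgcd : Nat.gcd h q = d := (Finset.mem_filter.mp hh).2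
        have h1 : ikD q u h * (E u h * P d) = W := by
          rw [← mul_assoc, hE u hu h, hgcd, hWP d hd]
        have h2 : eval z (ikD q u h) * (eval z (E u h) * eval z (P d)) = eval z W := by
          rw [← eval_mul, ← eval_mul, h1]
        have hD := hDne hz1 u h
        field_simp
        linear_combination h2
      calc ∑ d ∈ dvs, eval z (T d * P d)
          = ∑ d ∈ dvs, ∑ h ∈ fib d,
              (eval z W * (eval z (ikD q s h))⁻¹ - eval z W * (eval z (ikD q s' h))⁻¹) := by
            refine Finset.sum_congr rfl fun d hd => ?_
            rw [hT, eval_mul, eval_finset_sum, Finset.sum_mul]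
            refine Finset.sum_congr rfl fun h hh => ?_
            rw [eval_sub, sub_mul, hterm s hs d hd h hh, hterm s' hs' d hd h hh]
        _ = eval z W * ((∑ h ∈ Finset.range q, (eval z (ikD q s h))⁻¹)
              - ∑ h ∈ Finset.range q, (eval z (ikD q s' h))⁻¹) := by
            rw [← Finset.sum_fiberwise_of_maps_to hmaps (fun h => (eval z (ikD q s h))⁻¹),
              ← Finset.sum_fiberwise_of_maps_to hmaps (fun h => (eval z (ikD q s' h))⁻¹)]
            rw [mul_sub, Finset.mul_sum, Finset.mul_sum, ← Finset.sum_sub_distrib]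
            refine Finset.sum_congr rfl fun d hd => ?_
            rw [Finset.mul_sum, Finset.mul_sum, ← Finset.sum_sub_distrib]
        _ = 0 := by rw [hsum, sub_self, mul_zero]
    intro d hd
    have hTd : T d = 0 := by
      have h0 : T d * P d + ∑ d' ∈ dvs.erase d, T d' * P d' = 0 := by
        rw [Finset.add_sum_erase dvs (fun d' => T d' * P d') hd]
        exact hPP
      have hTP : T d * P d = -∑ d' ∈ dvs.erase d, T d' * P d' :=
        eq_neg_of_add_eq_zero_left h0
      have hdvd1 : ikPsi q d ^ (2 * n) ∣ T d * P d := by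
        rw [hTP, dvd_neg]
        apply Finset.dvd_sum
        intro d' hd'
        have hdmem : d ∈ dvs.erase d' :=
          Finset.mem_erase.mpr ⟨fun hcon => (Finset.mem_erase.mp hd').1 hcon.symm, hd⟩
        exact Dvd.dvd.mul_left (Finset.dvd_prod_of_mem _ hdmem) (T d')
      have hcop : IsCoprime (ikPsi q d ^ (2 * n)) (P d) := by
        rw [hP]
        apply IsCoprime.prod_right
        intro d' hd'
        exact (ikPsi_coprime hq0 fun hcon =>
          (Finset.mem_erase.mp hd').1 hcon.symm).pow
      have hdvd2 : ikPsi q d ^ (2 * n) ∣ T d := hcop.dvd_of_dvd_mul_right hdvd1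
      have hdegE : ∀ (u : Fin n → ℤ), ∀ h ∈ fib d,
          (E u h).degree < (ikPsi q d ^ (2 * n)).degree := by
        intro u h hh
        have hgcd : Nat.gcd h q = d := (Finset.mem_filter.mp hh).2
        have hdegD : 0 < (ikD q u h).degree := by
          rw [Polynomial.degree_eq_natDegree (ikD_monic u h).ne_zero, ikD_natDegree,
            Fintype.card_fin]
          exact_mod_cast (by omega : 0 < 2 * n)
        have hlt := Polynomial.degree_divByMonic_lt (ikPsi q (Nat.gcd h q) ^ (2 * n))
          (ikD q u h) (pow_ne_zero _ (ikPsi_monic (Nat.gcd h q)).ne_zero) hdegD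
        rw [hgcd] at hlt
        simpa [hEdef, hgcd] using hlt
      have hdegT : (T d).degree < (ikPsi q d ^ (2 * n)).degree := by
        rw [hT]
        refine lt_of_le_of_lt (Polynomial.degree_sum_le _ _) ?_
        rw [Finset.sup_lt_iff (bot_lt_iff_ne_bot.mpr fun hb =>
          pow_ne_zero (2 * n) (ikPsi_monic d).ne_zero (Polynomial.degree_eq_bot.mp hb))]
        intro h hh
        exact lt_of_le_of_lt (Polynomial.degree_sub_le _ _)
          (max_lt (hdegE s h hh) (hdegE s' h hh))
      exact Polynomial.eq_zero_of_dvd_of_degree_lt hdvd2 hdegT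
    have h2 := hTd
    simp only [hT] at h2
    rw [Finset.sum_sub_distrib] at h2
    exact sub_eq_zero.mp h2
  -- Step D : assemble the appended generating functions
  have htotq : Nat.totient q = q₀ * 2 := by
    obtain ⟨k, hk⟩ := Nat.totient_even (by omega : 2 < q)
    omega
  have hcard : Fintype.card (ZMod q)ˣ = q₀ * 2 := by
    rw [ZMod.card_units_eq_totient, htotq]
  obtain ⟨e, he⟩ := ik_units_equiv hcard t ht
  set J : ℕ → Polynomial ℂ :=
    fun d => (ikPsi q d ^ (2 * (r * q₀))) /ₘ (ikBU q (d : ℤ) ^ r) with hJdef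
  have hJ : ∀ d ∈ dvs, ikBU q (d : ℤ) ^ r * J d = ikPsi q d ^ (2 * (r * q₀)) := by
    intro d hd
    apply ikdiv ((ikBU_monic (q := q) (d : ℤ)).pow r)
    have h1 : ikBU q (d : ℤ) ∣ ikPsi q d ^ (q₀ * 2) := by
      rw [← hcard]
      exact ikBU_dvd (Nat.mem_divisors.mp hd).1
    calc ikBU q (d : ℤ) ^ r ∣ (ikPsi q d ^ (q₀ * 2)) ^ r := pow_dvd_pow_of_dvd h1 r
      _ = ikPsi q d ^ (2 * (r * q₀)) := by rw [← pow_mul]; congr 1; ring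
  intro z hz1
  rw [ikedaF_eval, ikedaF_eval]
  congr 1
  rw [← Finset.sum_fiberwise_of_maps_to hmaps
      (fun h => (eval z (ikD q (Sum.elim s fun p : Fin r × Fin q₀ => t p.2) h))⁻¹),
    ← Finset.sum_fiberwise_of_maps_to hmaps
      (fun h => (eval z (ikD q (Sum.elim s' fun p : Fin r × Fin q₀ => t p.2) h))⁻¹)]
  refine Finset.sum_congr rfl fun d hd => ?_
  have hPsine : eval z (ikPsi q d ^ (2 * n) * ikPsi q d ^ (2 * (r * q₀))) ≠ 0 := by
    rw [eval_mul, eval_pow, eval_pow]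
    exact mul_ne_zero (pow_ne_zero _ (eval_ikPsi_ne hq0 hz1 d))
      (pow_ne_zero _ (eval_ikPsi_ne hq0 hz1 d))
  have hfibsum : ∀ (u : Fin n → ℤ), (∀ i, Int.gcd (q : ℤ) (u i) = 1) →
      ∑ h ∈ fib d, (eval z (ikD q (Sum.elim u fun p : Fin r × Fin q₀ => t p.2) h))⁻¹
        = eval z (∑ h ∈ fib d, E u h) * eval z (J d)
            * (eval z (ikPsi q d ^ (2 * n) * ikPsi q d ^ (2 * (r * q₀))))⁻¹ := by
    intro u hu
    rw [eval_finset_sum, Finset.sum_mul, Finset.sum_mul]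
    refine Finset.sum_congr rfl fun h hh => ?_
    have hgcd : Nat.gcd h q = d := (Finset.mem_filter.mp hh).2
    have hDbig : ikD q (Sum.elim u fun p : Fin r × Fin q₀ => t p.2) h
        = ikD q u h * ikBU q (d : ℤ) ^ r := by
      rw [ikD_append u t e he h, ikBU_gcd h, hgcd]
    have hrel : ikD q (Sum.elim u fun p : Fin r × Fin q₀ => t p.2) h * (E u h * J d)
        = ikPsi q d ^ (2 * n) * ikPsi q d ^ (2 * (r * q₀)) := by
      rw [hDbig]
      calc ikD q u h * ikBU q (d : ℤ) ^ r * (E u h * J d)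
          = (ikD q u h * E u h) * (ikBU q (d : ℤ) ^ r * J d) := by ring
        _ = ikPsi q d ^ (2 * n) * ikPsi q d ^ (2 * (r * q₀)) := by
            rw [hE u hu h, hgcd, hJ d hd]
    have h2 : eval z (ikD q (Sum.elim u fun p : Fin r × Fin q₀ => t p.2) h)
        * (eval z (E u h) * eval z (J d))
        = eval z (ikPsi q d ^ (2 * n) * ikPsi q d ^ (2 * (r * q₀))) := by
      rw [← eval_mul, ← eval_mul, hrel]
    have hDb := hDne hz1 (Sum.elim u fun p : Fin r × Fin q₀ => t p.2) h
    have hEJne : eval z (E u h) * eval z (J d) ≠ 0 := by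
      intro h0
      rw [h0, mul_zero] at h2
      exact hPsine h2.symm
    rw [← h2, mul_inv, mul_comm (eval z (E u h) * eval z (J d)) _, mul_assoc,
      inv_mul_cancel₀ hEJne, mul_one]
  rw [hfibsum s hs, hfibsum s' hs', key d hd]
end

section
/- Let q be a positive integer divisible by 4. For each positive divisor d of q define the lattice ℒ_d = {(a,b) ∈ ℤ² : (q/d) ∣ b} and, for k ∈ ℕ, let N_d(k) denote the (finite) number of (a,b) ∈ ℒ_d with |a| + |b| = k. Then: (i) N_1(k) = N_2(k) for every natural number k < q/2; and (ii) for any two positive divisors d < d′ of q one has N_d(q/d′) ≠ N_{d′}(q/d′); in particular the sequences (N_d(k))_{k∈ℕ} for distinct divisors d of q are pairwise distinct. -/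
lemma countA (m k : ℕ) (h0 : 0 < k) (hk : k < m) :
    {p : ℤ × ℤ | (m : ℤ) ∣ p.2 ∧ p.1.natAbs + p.2.natAbs = k} =
      {((k : ℤ), (0:ℤ)), (-(k:ℤ), 0)} := by
  ext ⟨a, b⟩
  simp only [Set.mem_setOf_eq, Set.mem_insert_iff, Set.mem_singleton_iff, Prod.mk.injEq]
  constructor
  · rintro ⟨hdvd, hsum⟩
    have hb : b = 0 := by
      apply Int.eq_zero_of_dvd_of_natAbs_lt_natAbs hdvd
      simpa using by omega
    subst hb
    have : a.natAbs = k := by simpa using hsum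
    rcases Int.natAbs_eq_iff.1 this with h | h <;> simp [h]
  · rintro (⟨rfl, rfl⟩ | ⟨rfl, rfl⟩) <;> simp

lemma countB (m : ℕ) (h0 : 0 < m) :
    {p : ℤ × ℤ | (m : ℤ) ∣ p.2 ∧ p.1.natAbs + p.2.natAbs = m} =
      {((m : ℤ), (0:ℤ)), (-(m:ℤ), 0), (0, (m:ℤ)), (0, -(m:ℤ))} := by
  ext ⟨a, b⟩
  simp only [Set.mem_setOf_eq, Set.mem_insert_iff, Set.mem_singleton_iff, Prod.mk.injEq]
  constructor
  · rintro ⟨⟨j, rfl⟩, hsum⟩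
    rw [Int.natAbs_mul, Int.natAbs_natCast] at hsum
    have hj : j.natAbs ≤ 1 := by nlinarith [a.natAbs.zero_le]
    interval_cases hj' : j.natAbs
    · have : j = 0 := by omega
      subst this
      have : a.natAbs = m := by omega
      rcases Int.natAbs_eq_iff.1 this with h | h <;> simp [h]
    · have ha : a = 0 := by
        have : a.natAbs = 0 := by omega
        omega
      rcases Int.natAbs_eq_iff.1 hj' with h | h <;> simp [ha, h]
  · rintro (⟨rfl, rfl⟩ | ⟨rfl, rfl⟩ | ⟨rfl, rfl⟩ | ⟨rfl, rfl⟩) <;>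
      refine ⟨by simp, by simp⟩

lemma cardA (m k : ℕ) (h0 : 0 < k) (hk : k < m) :
    Set.ncard {p : ℤ × ℤ | (m : ℤ) ∣ p.2 ∧ p.1.natAbs + p.2.natAbs = k} = 2 := by
  rw [countA m k h0 hk]
  rw [Set.ncard_pair]
  intro h
  have := congrArg Prod.fst h
  simp at this
  omega

lemma cardB (m : ℕ) (h0 : 0 < m) :
    Set.ncard {p : ℤ × ℤ | (m : ℤ) ∣ p.2 ∧ p.1.natAbs + p.2.natAbs = m} = 4 := by
  rw [countB m h0]
  have hm : (0:ℤ) < (m:ℤ) := by exact_mod_cast h0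
  rw [Set.ncard_insert_of_notMem (by simp [Prod.ext_iff]; omega),
      Set.ncard_insert_of_notMem (by simp [Prod.ext_iff]; omega),
      Set.ncard_pair (by simp [Prod.ext_iff]; omega)]

lemma setEq (q k : ℕ) (h2 : 2 ∣ q) (hk : k < q / 2) :
    {p : ℤ × ℤ | ((q / 1 : ℕ) : ℤ) ∣ p.2 ∧ p.1.natAbs + p.2.natAbs = k} =
      {p : ℤ × ℤ | ((q / 2 : ℕ) : ℤ) ∣ p.2 ∧ p.1.natAbs + p.2.natAbs = k} := by
  have hle : q / 2 ≤ q := Nat.div_le_self q 2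
  ext ⟨a, b⟩
  simp only [Set.mem_setOf_eq, Nat.div_one]
  constructor
  · rintro ⟨hdvd, hsum⟩
    have hb : b = 0 := Int.eq_zero_of_dvd_of_natAbs_lt_natAbs hdvd (by simpa using by omega)
    exact ⟨by simp [hb], hsum⟩
  · rintro ⟨hdvd, hsum⟩
    have hb : b = 0 := Int.eq_zero_of_dvd_of_natAbs_lt_natAbs hdvd (by simpa using by omega)
    exact ⟨by simp [hb], hsum⟩

/-- For `q` divisible by 4 and a positive divisor `d` of `q`, let
`N d k` be the number of points `(a,b) ∈ ℤ²` with `(q/d) ∣ b` and `|a| + |b| = k`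
(the one-norm-`k` points of the congruence lattice of the lens orbifold `L(q;0,d)`).
Then (i) `N 1 k = N 2 k` for all `k < q/2`, (ii) `N d (q/d′) ≠ N d′ (q/d′)` for
positive divisors `d < d′` of `q`, and in particular (iii) the sequences `N d` for
distinct positive divisors `d` of `q` are pairwise distinct. -/
theorem lens_orbifold_lattice_counts
    (q : ℕ) (hq : 0 < q) (h4 : 4 ∣ q)
    (N : ℕ → ℕ → ℕ)
    (hN : ∀ d k, N d k = Set.ncard
      {p : ℤ × ℤ | ((q / d : ℕ) : ℤ) ∣ p.2 ∧ p.1.natAbs + p.2.natAbs = k}) :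
    (∀ k : ℕ, k < q / 2 → N 1 k = N 2 k) ∧
    (∀ d d' : ℕ, 0 < d → d ∣ q → d' ∣ q → d < d' → N d (q / d') ≠ N d' (q / d')) ∧
    (∀ d d' : ℕ, 0 < d → 0 < d' → d ∣ q → d' ∣ q → d ≠ d' →
      (fun k => N d k) ≠ (fun k => N d' k)) := by
  have h2 : 2 ∣ q := dvd_trans ⟨2, rfl⟩ h4
  have key : ∀ d d' : ℕ, 0 < d → d ∣ q → d' ∣ q → d < d' →
      N d (q / d') ≠ N d' (q / d') := by
    intro d d' hd hdq hd'q hdd'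
    have hd' : 0 < d' := lt_trans hd hdd'
    have hk0 : 0 < q / d' := Nat.div_pos (Nat.le_of_dvd hq hd'q) hd'
    have hqd : 0 < q / d := Nat.div_pos (Nat.le_of_dvd hq hdq) hd
    have hlt : q / d' < q / d := by
      by_contra hle
      push_neg at hle
      nlinarith [Nat.div_mul_cancel hdq, Nat.div_mul_cancel hd'q]
    rw [hN, hN, cardA _ _ hk0 hlt, cardB _ hk0]
    omega
  refine ⟨?_, key, ?_⟩
  · intro k hk
    rw [hN, hN, setEq q k h2 hk]
  · intro d d' hd hd' hdq hd'q hne hfun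
    rcases Nat.lt_or_ge d d' with h | h
    · exact key d d' hd hdq hd'q h (congrFun hfun (q / d'))
    · have h' : d' < d := lt_of_le_of_ne h (Ne.symm hne)
      exact key d' d hd' hd'q hdq h' (congrFun hfun (q / d)).symm
end
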